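/- arXiv:0808.1821 — 5 statements merged into one kernel-verified Lean document; each statement's English description precedes it below -/
import Mathlib

section
/- Let Φ=(f_1,…,f_n) be a polynomial automorphism of K^n, let deg_1 be a p.w.h. degree on K[x_1,…,x_n], and let I be the ideal of relations of Φ. Then there exists a nonzero locally nilpotent K-derivation ∂ of K[x_1,…,x_n] such that ∂(I) ⊆ I. Moreover, if I is principal, say I = (R), then ∂(R) = 0. -/
open MvPolynomial

/-- Leading term of a polynomial with respect to the weighted homogeneous degree
with weights `w`. -/
noncomputable def ldt {K : Type*} [CommSemiring K] {n : ℕ} (w : Fin n → ℕ)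
    (p : MvPolynomial (Fin n) K) : MvPolynomial (Fin n) K :=
  weightedHomogeneousComponent w (weightedTotalDegree w p) p

/-- The ideal of relations between the leading terms of the components of an
automorphism, with respect to the weighted degree with weights `w`. -/
noncomputable def relIdeal {K : Type*} [CommRing K] {n : ℕ} (w : Fin n → ℕ)
    (f : Fin n → MvPolynomial (Fin n) K) : Ideal (MvPolynomial (Fin n) K) :=
  RingHom.ker
    (aeval (fun i => ldt w (f i)) : MvPolynomial (Fin n) K →ₐ[K] MvPolynomial (Fin n) K)

/-- A derivation is locally nilpotent if every element is killed by some iterate. -/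
def IsLND {K A : Type*} [CommSemiring K] [CommRing A] [Algebra K A]
    (D : Derivation K A A) : Prop :=
  ∀ a : A, ∃ k : ℕ, (⇑D)^[k] a = 0

namespace StmtAux

open Finsupp Finset

variable {R : Type*} [CommRing R] {σ : Type*} {u : σ → ℕ}

theorem wtd_le_iff {p : MvPolynomial σ R} {m : ℕ} :
    weightedTotalDegree u p ≤ m ↔ ∀ α ∈ p.support, weight u α ≤ m :=
  Finset.sup_le_iff

theorem coeff_eq_zero_of_gt {p : MvPolynomial σ R} {α : σ →₀ ℕ}
    (h : weightedTotalDegree u p < weight u α) : coeff α p = 0 := by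
  by_contra hc
  exact absurd (le_weightedTotalDegree u (by simpa [MvPolynomial.mem_support_iff] using hc)) (not_le.mpr h)

theorem comp_wtd_ne_zero {p : MvPolynomial σ R} (hp : p ≠ 0) :
    weightedHomogeneousComponent u (weightedTotalDegree u p) p ≠ 0 := by
  classical
  obtain ⟨α, hα, hmax⟩ := Finset.exists_mem_eq_sup p.support
    (support_nonempty.mpr hp) (weight u)
  intro h
  have hc := coeff_weightedHomogeneousComponent (w := u)
      (n := weightedTotalDegree u p) α (φ := p)
  have hmax' : (weight u) α = weightedTotalDegree u p := hmax.symm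
  rw [h, coeff_zero, if_pos hmax'] at hc
  exact (MvPolynomial.mem_support_iff.mp hα) hc.symm

theorem eq_sum_comp_of_vanish {p : MvPolynomial σ R} {M : ℕ}
    (h : ∀ b, M < b → weightedHomogeneousComponent u b p = 0) :
    ∑ m ∈ Finset.range (M + 1), weightedHomogeneousComponent u m p = p := by
  classical
  ext α
  rw [coeff_sum]
  simp only [coeff_weightedHomogeneousComponent]
  rw [Finset.sum_ite_eq (Finset.range (M + 1)) (weight u α) (fun _ => coeff α p)]
  split_ifs with hmem
  · rfl
  · have hlt : M < weight u α := by
      simpa [Finset.mem_range, Nat.lt_succ_iff, not_le] using hmem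
    have h2 := coeff_weightedHomogeneousComponent (w := u) (n := weight u α) α (φ := p)
    rw [h _ hlt, coeff_zero, if_pos rfl] at h2
    exact h2

theorem eq_sum_comp (p : MvPolynomial σ R) :
    ∑ m ∈ Finset.range (weightedTotalDegree u p + 1), weightedHomogeneousComponent u m p = p :=
  eq_sum_comp_of_vanish fun _ hb => weightedHomogeneousComponent_eq_zero _ _ hb

theorem comp_mul_top {p q : MvPolynomial σ R} {a b : ℕ}
    (hp : weightedTotalDegree u p ≤ a) (hq : weightedTotalDegree u q ≤ b) :
    weightedHomogeneousComponent u (a + b) (p * q) =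
      weightedHomogeneousComponent u a p * weightedHomogeneousComponent u b q := by
  classical
  ext γ
  rw [coeff_weightedHomogeneousComponent, coeff_mul, coeff_mul]
  split_ifs with hγ
  · refine Finset.sum_congr rfl fun x hx => ?_
    rw [Finset.HasAntidiagonal.mem_antidiagonal] at hx
    rw [coeff_weightedHomogeneousComponent, coeff_weightedHomogeneousComponent]
    have hw : weight u x.1 + weight u x.2 = a + b := by rw [← map_add, hx, hγ]
    by_cases h1 : weight u x.1 = a
    · rw [if_pos h1, if_pos (by omega)]
    · rw [if_neg h1]
      rcases lt_or_gt_of_ne h1 with hlt | hgt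
      · have h2 : coeff x.2 q = 0 := coeff_eq_zero_of_gt (lt_of_le_of_lt hq (by omega))
        rw [h2, mul_zero, zero_mul]
      · have h2 : coeff x.1 p = 0 := coeff_eq_zero_of_gt (lt_of_le_of_lt hp (by omega))
        rw [h2, zero_mul, zero_mul]
  · symm
    refine Finset.sum_eq_zero fun x hx => ?_
    rw [Finset.HasAntidiagonal.mem_antidiagonal] at hx
    rw [coeff_weightedHomogeneousComponent, coeff_weightedHomogeneousComponent]
    by_cases h1 : weight u x.1 = a
    · by_cases h2 : weight u x.2 = b
      · exact absurd (by rw [← hx, map_add, h1, h2]) hγ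
      · rw [if_neg h2, mul_zero]
    · rw [if_neg h1, zero_mul]

theorem comp_homog_mul {p q : MvPolynomial σ R} {b : ℕ}
    (hp : IsWeightedHomogeneous u p b) (m : ℕ) :
    weightedHomogeneousComponent u (b + m) (p * q) =
      p * weightedHomogeneousComponent u m q := by
  classical
  ext γ
  rw [coeff_weightedHomogeneousComponent, coeff_mul, coeff_mul]
  split_ifs with hγ
  · refine Finset.sum_congr rfl fun x hx => ?_
    rw [Finset.HasAntidiagonal.mem_antidiagonal] at hx
    rw [coeff_weightedHomogeneousComponent]
    by_cases h1 : coeff x.1 p = 0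
    · rw [h1, zero_mul, zero_mul]
    · have hw1 : weight u x.1 = b := hp h1
      have hw : weight u x.1 + weight u x.2 = b + m := by rw [← map_add, hx, hγ]
      rw [if_pos (by omega)]
  · symm
    refine Finset.sum_eq_zero fun x hx => ?_
    rw [Finset.HasAntidiagonal.mem_antidiagonal] at hx
    rw [coeff_weightedHomogeneousComponent]
    by_cases h1 : coeff x.1 p = 0
    · rw [h1, zero_mul]
    · have hw1 : weight u x.1 = b := hp h1
      by_cases h2 : weight u x.2 = m
      · exact absurd (by rw [← hx, map_add, hw1, h2]) hγ
      · rw [if_neg h2, mul_zero]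

theorem isWH_wtd_le {p : MvPolynomial σ R} {b : ℕ} (hp : IsWeightedHomogeneous u p b) :
    weightedTotalDegree u p ≤ b :=
  wtd_le_iff.mpr fun _ hα => le_of_eq (hp (MvPolynomial.mem_support_iff.mp hα))

theorem wtd_of_isWH {p : MvPolynomial σ R} {b : ℕ} (hp : p ≠ 0)
    (hb : IsWeightedHomogeneous u p b) : weightedTotalDegree u p = b := by
  refine le_antisymm (isWH_wtd_le hb) ?_
  by_contra hlt
  exact comp_wtd_ne_zero hp (hb.weightedHomogeneousComponent_ne _ (by omega))

theorem wtd_mul_le {p q : MvPolynomial σ R} :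
    weightedTotalDegree u (p * q) ≤ weightedTotalDegree u p + weightedTotalDegree u q := by
  classical
  rw [wtd_le_iff]
  intro α hα
  rw [MvPolynomial.mem_support_iff, coeff_mul] at hα
  obtain ⟨x, hx, hne⟩ := Finset.exists_ne_zero_of_sum_ne_zero hα
  rw [Finset.HasAntidiagonal.mem_antidiagonal] at hx
  have h1 : coeff x.1 p ≠ 0 := left_ne_zero_of_mul hne
  have h2 : coeff x.2 q ≠ 0 := right_ne_zero_of_mul hne
  calc weight u α = weight u x.1 + weight u x.2 := by rw [← hx, map_add]
    _ ≤ _ := add_le_add (le_weightedTotalDegree u (MvPolynomial.mem_support_iff.mpr h1))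
        (le_weightedTotalDegree u (MvPolynomial.mem_support_iff.mpr h2))

theorem wtd_one_le : weightedTotalDegree u (1 : MvPolynomial σ R) ≤ 0 := by
  classical
  rw [wtd_le_iff]
  intro α hα
  rw [MvPolynomial.mem_support_iff, coeff_one] at hα
  have : (0 : σ →₀ ℕ) = α := by by_contra h; rw [if_neg h] at hα; exact hα rfl
  rw [← this, map_zero]

theorem wtd_pow_le {p : MvPolynomial σ R} {a : ℕ} (hp : weightedTotalDegree u p ≤ a) (k : ℕ) :
    weightedTotalDegree u (p ^ k) ≤ k * a := by
  induction k with
  | zero => simpa using wtd_one_le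
  | succ k ih =>
    rw [pow_succ]
    calc weightedTotalDegree u (p ^ k * p) ≤ _ + _ := wtd_mul_le
      _ ≤ k * a + a := add_le_add ih hp
      _ = (k + 1) * a := by ring

theorem wtd_prod_le {ι : Type*} {s : Finset ι} {v : ι → MvPolynomial σ R} {m : ι → ℕ}
    (h : ∀ t ∈ s, weightedTotalDegree u (v t) ≤ m t) :
    weightedTotalDegree u (∏ t ∈ s, v t) ≤ ∑ t ∈ s, m t := by
  classical
  induction s using Finset.induction with
  | empty => simpa using wtd_one_le
  | insert t s hts ih =>
    rw [Finset.prod_insert hts, Finset.sum_insert hts]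
    calc weightedTotalDegree u _ ≤ _ + _ := wtd_mul_le
      _ ≤ _ := add_le_add (h t (Finset.mem_insert_self t s))
          (ih fun x hx => h x (Finset.mem_insert_of_mem hx))

theorem wtd_sum_le {ι : Type*} {s : Finset ι} {F : ι → MvPolynomial σ R} {a : ℕ}
    (h : ∀ t ∈ s, weightedTotalDegree u (F t) ≤ a) :
    weightedTotalDegree u (∑ t ∈ s, F t) ≤ a := by
  rw [wtd_le_iff]
  intro α hα
  rw [MvPolynomial.mem_support_iff, coeff_sum] at hα
  obtain ⟨t, ht, hne⟩ := Finset.exists_ne_zero_of_sum_ne_zero hα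
  exact le_trans (le_weightedTotalDegree u (MvPolynomial.mem_support_iff.mpr hne)) (h t ht)

theorem wtd_mul {p q : MvPolynomial σ R} [IsDomain R] (hp : p ≠ 0) (hq : q ≠ 0) :
    weightedTotalDegree u (p * q) = weightedTotalDegree u p + weightedTotalDegree u q := by
  refine le_antisymm wtd_mul_le ?_
  have h := comp_mul_top (le_refl (weightedTotalDegree u p)) (le_refl (weightedTotalDegree u q))
  have hne : weightedHomogeneousComponent u
      (weightedTotalDegree u p + weightedTotalDegree u q) (p * q) ≠ 0 := by
    rw [h]; exact mul_ne_zero (comp_wtd_ne_zero hp) (comp_wtd_ne_zero hq)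
  by_contra hlt
  push_neg at hlt
  exact hne (weightedHomogeneousComponent_eq_zero _ _ hlt)

theorem wtd_pow {p : MvPolynomial σ R} [IsDomain R] (hp : p ≠ 0) (k : ℕ) :
    weightedTotalDegree u (p ^ k) = k * weightedTotalDegree u p := by
  induction k with
  | zero =>
    simp only [pow_zero, zero_mul]
    exact le_antisymm wtd_one_le (Nat.zero_le _)
  | succ k ih => rw [pow_succ, wtd_mul (pow_ne_zero k hp) hp, ih]; ring

theorem comp_finset_prod_top {ι : Type*} {s : Finset ι} {v : ι → MvPolynomial σ R} {m : ι → ℕ}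
    (h : ∀ t ∈ s, weightedTotalDegree u (v t) ≤ m t) :
    weightedHomogeneousComponent u (∑ t ∈ s, m t) (∏ t ∈ s, v t) =
      ∏ t ∈ s, weightedHomogeneousComponent u (m t) (v t) := by
  classical
  induction s using Finset.induction with
  | empty =>
    simp only [Finset.sum_empty, Finset.prod_empty]
    exact (isWeightedHomogeneous_one R u).weightedHomogeneousComponent_same
  | insert t s hts ih =>
    rw [Finset.prod_insert hts, Finset.sum_insert hts, Finset.prod_insert hts,
      comp_mul_top (h t (Finset.mem_insert_self t s))
        (wtd_prod_le fun x hx => h x (Finset.mem_insert_of_mem hx)),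
      ih fun x hx => h x (Finset.mem_insert_of_mem hx)]

theorem isWH_pow {p : MvPolynomial σ R} {b : ℕ} (hp : IsWeightedHomogeneous u p b) (k : ℕ) :
    IsWeightedHomogeneous u (p ^ k) (k * b) := by
  induction k with
  | zero => simpa using isWeightedHomogeneous_one R u
  | succ k ih =>
    rw [pow_succ, show (k + 1) * b = k * b + b by ring]
    exact ih.mul hp

theorem weight_single_one (i : σ) : weight u (Finsupp.single i 1) = u i := by
  rw [Finsupp.weight_apply, Finsupp.sum_single_index] <;> simp

theorem weight_sub_single {α : σ →₀ ℕ} {i : σ} (h : α i ≠ 0) :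
    weight u (α - Finsupp.single i 1) + u i = weight u α := by
  have hle : Finsupp.single i 1 ≤ α := by
    rw [Finsupp.single_le_iff]; omega
  have hadd : (α - Finsupp.single i 1) + Finsupp.single i 1 = α := tsub_add_cancel_of_le hle
  conv_rhs => rw [← hadd]
  rw [map_add, weight_single_one]


section DerBasic

variable {K A : Type*} [CommRing K] [CommRing A] [Algebra K A]

theorem iter_map_zero (D : Derivation K A A) (k : ℕ) : (⇑D)^[k] (0 : A) = 0 := by
  induction k with
  | zero => rfl
  | succ k ih => rw [Function.iterate_succ_apply', ih, map_zero]

theorem iter_vanish (D : Derivation K A A) {x : A} {p : ℕ} (h : (⇑D)^[p] x = 0) {m : ℕ}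
    (hm : p ≤ m) : (⇑D)^[m] x = 0 := by
  rw [show m = (m - p) + p by omega, Function.iterate_add_apply, h, iter_map_zero]

theorem iter_sum (D : Derivation K A A) {ι : Type*} (s : Finset ι) (F : ι → A) (k : ℕ) :
    (⇑D)^[k] (∑ t ∈ s, F t) = ∑ t ∈ s, (⇑D)^[k] (F t) := by
  induction k with
  | zero => simp
  | succ k ih =>
    rw [Function.iterate_succ_apply', ih, map_sum]
    exact Finset.sum_congr rfl fun t _ => (Function.iterate_succ_apply' _ _ _).symm

theorem iterate_leibniz (D : Derivation K A A) (u v : A) (n : ℕ) :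
    (⇑D)^[n] (u * v) =
      ∑ k ∈ Finset.range (n + 1), n.choose k • ((⇑D)^[n - k] u * (⇑D)^[k] v) := by
  induction n with
  | zero => simp
  | succ n IH =>
    calc
      (⇑D)^[n + 1] (u * v) = D (∑ k ∈ range (n + 1),
          n.choose k • ((⇑D)^[n - k] u * (⇑D)^[k] v)) := by
        rw [Function.iterate_succ_apply', IH]
      _ = (∑ k ∈ range (n + 1),
            n.choose k • ((⇑D)^[n - k + 1] u * (⇑D)^[k] v)) +
          ∑ k ∈ range (n + 1),
            n.choose k • ((⇑D)^[n - k] u * (⇑D)^[k + 1] v) := by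
        rw [map_sum, ← sum_add_distrib]
        refine Finset.sum_congr rfl fun k _ => ?_
        rw [map_nsmul, Derivation.leibniz, smul_eq_mul, smul_eq_mul, smul_add]
        rw [show (⇑D)^[n - k] u * D ((⇑D)^[k] v) = (⇑D)^[n - k] u * (⇑D)^[k + 1] v from by
          rw [← Function.iterate_succ_apply' (⇑D) k v]]
        rw [show (⇑D)^[k] v * D ((⇑D)^[n - k] u) = (⇑D)^[n - k + 1] u * (⇑D)^[k] v from by
          rw [← Function.iterate_succ_apply' (⇑D) (n - k) u, mul_comm]]
        rw [add_comm]
      _ = ((∑ k ∈ range (n + 1),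
            n.choose (k + 1) • ((⇑D)^[n - k] u * (⇑D)^[k + 1] v)) +
            1 • ((⇑D)^[n + 1] u * (⇑D)^[0] v)) +
          ∑ k ∈ range (n + 1),
            n.choose k • ((⇑D)^[n - k] u * (⇑D)^[k + 1] v) := ?_
      _ = ((∑ k ∈ range (n + 1),
            n.choose (k + 1) • ((⇑D)^[n - k] u * (⇑D)^[k + 1] v)) +
          ∑ k ∈ range (n + 1),
            n.choose k • ((⇑D)^[n - k] u * (⇑D)^[k + 1] v)) +
            1 • ((⇑D)^[n + 1] u * (⇑D)^[0] v) := by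
        abel
      _ = (∑ k ∈ range (n + 1),
            (n + 1).choose (k + 1) • ((⇑D)^[n + 1 - (k + 1)] u * (⇑D)^[k + 1] v)) +
            1 • ((⇑D)^[n + 1] u * (⇑D)^[0] v) := by
        congr 1
        rw [← sum_add_distrib]
        refine Finset.sum_congr rfl fun k _ => ?_
        rw [Nat.choose_succ_succ, Nat.succ_sub_succ, add_smul, add_comm]
      _ = ∑ k ∈ range (n + 2),
            (n + 1).choose k • ((⇑D)^[n + 1 - k] u * (⇑D)^[k] v) := by
        rw [Finset.sum_range_succ' _ (n + 1), Nat.choose_zero_right, tsub_zero]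
    congr 1
    refine (Finset.sum_range_succ' _ _).trans (congr_arg₂ (· + ·) ?_ ?_)
    · rw [Finset.sum_range_succ, Nat.choose_succ_self, zero_smul, add_zero]
      refine Finset.sum_congr rfl fun k hk => ?_
      rw [mem_range] at hk
      have h' : n - (k + 1) + 1 = n - k := by omega
      rw [h']
    · rw [Nat.choose_zero_right, tsub_zero]

theorem derivation_eq_zero_of_dvd [IsDomain A] [CharZero A] (D : Derivation K A A)
    (hl : ∀ x : A, ∃ k, (⇑D)^[k] x = 0) {a b : A} (hab : D a = a * b) : D a = 0 := by
  classical
  by_contra hne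
  have ha : a ≠ 0 := by rintro rfl; rw [zero_mul] at hab; exact hne hab
  have hb : b ≠ 0 := by rintro rfl; rw [mul_zero] at hab; exact hne hab
  have hEa : ∃ k, (⇑D)^[k] a = 0 := hl a
  have hEb : ∃ k, (⇑D)^[k] b = 0 := hl b
  set Pa := Nat.find hEa with hPa
  set Pb := Nat.find hEb with hPb
  have hPa1 : 1 ≤ Pa := by
    rcases Nat.eq_zero_or_pos Pa with h | h
    · exact absurd (by simpa [h, ← hPa] using Nat.find_spec hEa) ha
    · exact h
  have hPb1 : 1 ≤ Pb := by
    rcases Nat.eq_zero_or_pos Pb with h | h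
    · exact absurd (by simpa [h, ← hPb] using Nat.find_spec hEb) hb
    · exact h
  have hato : (⇑D)^[Pa - 1] a ≠ 0 := Nat.find_min hEa (by omega)
  have hbto : (⇑D)^[Pb - 1] b ≠ 0 := Nat.find_min hEb (by omega)
  have hkey : (⇑D)^[(Pa - 1) + (Pb - 1)] (a * b) ≠ 0 := by
    rw [iterate_leibniz]
    have hsplit : ∀ k ∈ Finset.range ((Pa - 1) + (Pb - 1) + 1), k ≠ Pb - 1 →
        ((Pa - 1) + (Pb - 1)).choose k •
          ((⇑D)^[(Pa - 1) + (Pb - 1) - k] a * (⇑D)^[k] b) = 0 := by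
      intro k hk hkne
      rw [mem_range] at hk
      rcases lt_or_gt_of_ne hkne with hlt | hgt
      · have h0 : (⇑D)^[(Pa - 1) + (Pb - 1) - k] a = 0 :=
          iter_vanish D (Nat.find_spec hEa) (by omega)
        rw [h0, zero_mul, smul_zero]
      · have h0 : (⇑D)^[k] b = 0 := iter_vanish D (Nat.find_spec hEb) (by omega)
        rw [h0, mul_zero, smul_zero]
    rw [Finset.sum_eq_single_of_mem (Pb - 1) (by rw [mem_range]; omega) hsplit]
    have harith : (Pa - 1) + (Pb - 1) - (Pb - 1) = Pa - 1 := by omega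
    rw [harith, nsmul_eq_mul]
    refine mul_ne_zero ?_ (mul_ne_zero hato hbto)
    exact Nat.cast_ne_zero.mpr (Nat.choose_pos (by omega)).ne'
  refine hkey ?_
  rw [← hab, ← Function.iterate_succ_apply]
  exact iter_vanish D (Nat.find_spec hEa) (by omega)

end DerBasic

section DerMv

variable {K : Type*} [CommRing K] {σ : Type*} {u : σ → ℕ}

theorem wtd_C_le (c : K) : weightedTotalDegree u (C c : MvPolynomial σ K) ≤ 0 := by
  classical
  rw [wtd_le_iff]
  intro α hα
  rw [MvPolynomial.mem_support_iff, coeff_C] at hα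
  have : (0 : σ →₀ ℕ) = α := by by_contra h; rw [if_neg h] at hα; exact hα rfl
  rw [← this, map_zero]

theorem weight_eq_sum (dv : σ → ℕ) (α : σ →₀ ℕ) :
    weight dv α = ∑ j ∈ α.support, α j * dv j := by
  rw [Finsupp.weight_apply, Finsupp.sum]
  simp [smul_eq_mul]

theorem comp_pow_top {p : MvPolynomial σ K} {a : ℕ}
    (hp : weightedTotalDegree u p ≤ a) (k : ℕ) :
    weightedHomogeneousComponent u (k * a) (p ^ k) =
      (weightedHomogeneousComponent u a p) ^ k := by
  induction k with
  | zero =>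
    simpa using (isWeightedHomogeneous_one K u).weightedHomogeneousComponent_same
  | succ k ih =>
    rw [pow_succ, pow_succ, show (k + 1) * a = k * a + a from by ring,
      comp_mul_top (wtd_pow_le hp k) hp, ih]

theorem wtd_pderiv (i : σ) {q : MvPolynomial σ K} (hq : pderiv i q ≠ 0) :
    weightedTotalDegree u (pderiv i q) + u i ≤ weightedTotalDegree u q := by
  classical
  obtain ⟨α, hα, hmax⟩ := Finset.exists_mem_eq_sup (pderiv i q).support
    (support_nonempty.mpr hq) (weight u)
  have hwtd : weightedTotalDegree u (pderiv i q) = weight u α := hmax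
  rw [hwtd]
  have hexp : pderiv i q =
      ∑ β ∈ q.support, monomial (β - Finsupp.single i 1) (coeff β q * (β i : K)) := by
    conv_lhs => rw [q.as_sum]
    rw [map_sum]
    exact Finset.sum_congr rfl fun β _ => pderiv_monomial
  have hcoeff : coeff α (pderiv i q) ≠ 0 := MvPolynomial.mem_support_iff.mp hα
  rw [hexp, coeff_sum] at hcoeff
  obtain ⟨β, hβ, hne⟩ := Finset.exists_ne_zero_of_sum_ne_zero hcoeff
  rw [coeff_monomial] at hne
  have heq : β - Finsupp.single i 1 = α := by
    by_contra h; rw [if_neg h] at hne; exact hne rfl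
  rw [if_pos heq] at hne
  have hβi : β i ≠ 0 := by
    intro h0
    rw [h0] at hne
    simp at hne
  rw [← heq, weight_sub_single hβi]
  exact le_weightedTotalDegree u hβ

theorem pderiv_iter_zero (i : σ) (q : MvPolynomial σ K) :
    ∃ k, (⇑(pderiv i (R := K)))^[k] q = 0 := by
  set u1 : σ → ℕ := fun _ => 1 with hu1
  suffices h : ∀ m (q : MvPolynomial σ K), weightedTotalDegree u1 q ≤ m →
      (⇑(pderiv i (R := K)))^[m + 1] q = 0 by
    exact ⟨weightedTotalDegree u1 q + 1, h _ q le_rfl⟩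
  intro m
  induction m with
  | zero =>
    intro q hq
    rw [Function.iterate_one]
    by_contra h0
    have hd := wtd_pderiv (u := u1) i h0
    have h1 : u1 i = 1 := rfl
    omega
  | succ m ih =>
    intro q hq
    rw [Function.iterate_succ_apply]
    by_cases h0 : pderiv i q = 0
    · rw [h0]; exact iter_map_zero _ _
    · refine ih _ ?_
      have hd := wtd_pderiv (u := u1) i h0
      have h1 : u1 i = 1 := rfl
      omega

end DerMv

section Conj

variable {K : Type*} [CommRing K] {n : ℕ}

/-- Conjugated multiple of a partial derivative. -/
noncomputable def conjDer (φe : MvPolynomial (Fin n) K ≃ₐ[K] MvPolynomial (Fin n) K)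
    (g : MvPolynomial (Fin n) K) (i : Fin n) :
    Derivation K (MvPolynomial (Fin n) K) (MvPolynomial (Fin n) K) where
  toFun Q := φe.symm (g * pderiv i (φe Q))
  map_add' p q := by
    rw [map_add, map_add, mul_add, map_add]
  map_smul' c p := by
    rw [RingHom.id_apply, map_smul, Derivation.map_smul, mul_smul_comm, map_smul]
  map_one_eq_zero' := by
    simp only [LinearMap.coe_mk, AddHom.coe_mk, map_one, pderiv_one, mul_zero, map_zero]
  leibniz' p q := by
    simp only [LinearMap.coe_mk, AddHom.coe_mk, smul_eq_mul]
    rw [map_mul φe, Derivation.leibniz, smul_eq_mul, smul_eq_mul, mul_add, map_add]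
    congr 1
    · rw [mul_left_comm, map_mul φe.symm, AlgEquiv.symm_apply_apply]
    · rw [mul_left_comm, map_mul φe.symm, AlgEquiv.symm_apply_apply]

theorem conjDer_apply (φe : MvPolynomial (Fin n) K ≃ₐ[K] MvPolynomial (Fin n) K)
    (g : MvPolynomial (Fin n) K) (i : Fin n) (Q : MvPolynomial (Fin n) K) :
    conjDer φe g i Q = φe.symm (g * pderiv i (φe Q)) := rfl

theorem conjDer_iterate (φe : MvPolynomial (Fin n) K ≃ₐ[K] MvPolynomial (Fin n) K)
    (g : MvPolynomial (Fin n) K) (i : Fin n) (hg : pderiv i g = 0) (k : ℕ)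
    (Q : MvPolynomial (Fin n) K) :
    (⇑(conjDer φe g i))^[k] Q = φe.symm (g ^ k * (⇑(pderiv i (R := K)))^[k] (φe Q)) := by
  induction k with
  | zero =>
    simp only [Function.iterate_zero, id_eq, pow_zero, one_mul]
    rw [AlgEquiv.symm_apply_apply]
  | succ k ih =>
    rw [Function.iterate_succ_apply', ih, conjDer_apply, AlgEquiv.apply_symm_apply]
    have hgk : pderiv i (g ^ k) = 0 := by
      rw [Derivation.leibniz_pow, hg]; simp
    rw [pderiv_mul, hgk, zero_mul, zero_add, ← mul_assoc, ← pow_succ',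
      ← Function.iterate_succ_apply' (⇑(pderiv i (R := K)))]

theorem conjDer_lnd (φe : MvPolynomial (Fin n) K ≃ₐ[K] MvPolynomial (Fin n) K)
    (g : MvPolynomial (Fin n) K) (i : Fin n) (hg : pderiv i g = 0)
    (Q : MvPolynomial (Fin n) K) : ∃ k, (⇑(conjDer φe g i))^[k] Q = 0 := by
  obtain ⟨k, hk⟩ := pderiv_iter_zero i (φe Q)
  exact ⟨k, by rw [conjDer_iterate φe g i hg, hk, mul_zero, map_zero]⟩

theorem der_monomial (D : Derivation K (MvPolynomial (Fin n) K) (MvPolynomial (Fin n) K))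
    (α : Fin n →₀ ℕ) (c : K) :
    D (monomial α c) =
      c • ∑ j ∈ α.support, monomial (α - Finsupp.single j 1) ((α j : K)) * D (X j) := by
  have hD : D = mkDerivation K fun j => D (X j) :=
    derivation_ext fun j => by rw [mkDerivation_X]
  conv_lhs => rw [hD, mkDerivation_monomial]
  congr 1

end Conj

section TopPart

variable {K : Type*} [CommRing K] {n : ℕ} {dv : Fin n → ℕ}

theorem der_comp_top (δ D : Derivation K (MvPolynomial (Fin n) K) (MvPolynomial (Fin n) K))
    (E : ℕ) (hD : ∀ j, D (X j) = weightedHomogeneousComponent dv (dv j + E) (δ (X j)))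
    {a : ℕ} {Q : MvPolynomial (Fin n) K} (hQ : IsWeightedHomogeneous dv Q a) :
    D Q = weightedHomogeneousComponent dv (a + E) (δ Q) := by
  classical
  have key : ∀ (α : Fin n →₀ ℕ) (c : K), weight dv α = a →
      D (monomial α c) = weightedHomogeneousComponent dv (a + E) (δ (monomial α c)) := by
    intro α c hα
    rw [der_monomial D, der_monomial δ, map_smul, map_sum]
    congr 1
    refine Finset.sum_congr rfl fun j hj => ?_
    have hji : α j ≠ 0 := Finsupp.mem_support_iff.mp hj
    have hwt : weight dv (α - Finsupp.single j 1) + dv j = a := by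
      rw [weight_sub_single hji, hα]
    have hmono : IsWeightedHomogeneous dv
        (monomial (α - Finsupp.single j 1) ((α j : K)))
        (weight dv (α - Finsupp.single j 1)) :=
      isWeightedHomogeneous_monomial _ _ _ rfl
    rw [show a + E = weight dv (α - Finsupp.single j 1) + (dv j + E) from by omega,
      comp_homog_mul hmono, hD j]
  rw [show Q = ∑ α ∈ Q.support, monomial α (coeff α Q) from Q.as_sum,
    map_sum, map_sum, map_sum]
  exact Finset.sum_congr rfl fun α hα =>
    key α _ (hQ (MvPolynomial.mem_support_iff.mp hα))

theorem der_comp_vanish (δ : Derivation K (MvPolynomial (Fin n) K) (MvPolynomial (Fin n) K))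
    (E : ℕ) (hE1 : ∀ j, weightedTotalDegree dv (δ (X j)) ≤ dv j + E)
    {a : ℕ} {Q : MvPolynomial (Fin n) K} (hQ : IsWeightedHomogeneous dv Q a)
    {b : ℕ} (hb : a + E < b) :
    weightedHomogeneousComponent dv b (δ Q) = 0 := by
  classical
  have key : ∀ (α : Fin n →₀ ℕ) (c : K), weight dv α = a →
      weightedHomogeneousComponent dv b (δ (monomial α c)) = 0 := by
    intro α c hα
    rw [der_monomial δ, map_smul, map_sum]
    have hz : ∑ j ∈ α.support, weightedHomogeneousComponent dv b
        (monomial (α - Finsupp.single j 1) ((α j : K)) * δ (X j)) = 0 := by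
      refine Finset.sum_eq_zero fun j hj => ?_
      have hji : α j ≠ 0 := Finsupp.mem_support_iff.mp hj
      have hwt : weight dv (α - Finsupp.single j 1) + dv j = a := by
        rw [weight_sub_single hji, hα]
      have hmono : IsWeightedHomogeneous dv
          (monomial (α - Finsupp.single j 1) ((α j : K)))
          (weight dv (α - Finsupp.single j 1)) :=
        isWeightedHomogeneous_monomial _ _ _ rfl
      rw [show b = weight dv (α - Finsupp.single j 1) +
          (b - weight dv (α - Finsupp.single j 1)) from by omega,
        comp_homog_mul hmono,
        weightedHomogeneousComponent_eq_zero _ _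
          (lt_of_le_of_lt (hE1 j) (by omega)), mul_zero]
    rw [hz, smul_zero]
  rw [show Q = ∑ α ∈ Q.support, monomial α (coeff α Q) from Q.as_sum, map_sum, map_sum]
  exact Finset.sum_eq_zero fun α hα => key α _ (hQ (MvPolynomial.mem_support_iff.mp hα))

theorem der_iterate_top (δ D : Derivation K (MvPolynomial (Fin n) K) (MvPolynomial (Fin n) K))
    (E : ℕ) (hD : ∀ j, D (X j) = weightedHomogeneousComponent dv (dv j + E) (δ (X j)))
    (hE1 : ∀ j, weightedTotalDegree dv (δ (X j)) ≤ dv j + E) :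
    ∀ (k : ℕ) {a : ℕ} {Q : MvPolynomial (Fin n) K}, IsWeightedHomogeneous dv Q a →
      ((⇑D)^[k] Q = weightedHomogeneousComponent dv (a + k * E) ((⇑δ)^[k] Q) ∧
        ∀ b, a + k * E < b → weightedHomogeneousComponent dv b ((⇑δ)^[k] Q) = 0) := by
  intro k
  induction k with
  | zero =>
    intro a Q hQ
    constructor
    · simpa using hQ.weightedHomogeneousComponent_same.symm
    · intro b hb
      exact hQ.weightedHomogeneousComponent_ne b (by omega)
  | succ k ih =>
    intro a Q hQ
    obtain ⟨h1, h2⟩ := ih hQ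
    have hcomphom : ∀ m, IsWeightedHomogeneous dv
        (weightedHomogeneousComponent dv m ((⇑δ)^[k] Q)) m :=
      fun m => weightedHomogeneousComponent_isWeightedHomogeneous m _
    have hdec : ∑ m ∈ Finset.range (a + k * E + 1),
        weightedHomogeneousComponent dv m ((⇑δ)^[k] Q) = (⇑δ)^[k] Q :=
      eq_sum_comp_of_vanish fun b hb => h2 b hb
    have hδq : (⇑δ)^[k + 1] Q = ∑ m ∈ Finset.range (a + k * E + 1),
        δ (weightedHomogeneousComponent dv m ((⇑δ)^[k] Q)) := by
      rw [Function.iterate_succ_apply', ← map_sum, hdec]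
    constructor
    · rw [Function.iterate_succ_apply', h1,
        der_comp_top δ D E hD (hcomphom (a + k * E)), hδq, map_sum,
        Finset.sum_range_succ]
      have hz : ∑ m ∈ Finset.range (a + k * E),
          weightedHomogeneousComponent dv (a + (k + 1) * E)
            (δ (weightedHomogeneousComponent dv m ((⇑δ)^[k] Q))) = 0 := by
        refine Finset.sum_eq_zero fun m hm => ?_
        rw [Finset.mem_range] at hm
        refine der_comp_vanish δ E hE1 (hcomphom m) ?_
        have harith : a + (k + 1) * E = a + k * E + E := by ring
        omega
      rw [hz, zero_add]
      congr 1
      ring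
    · intro b hb
      rw [hδq, map_sum]
      refine Finset.sum_eq_zero fun m hm => ?_
      rw [Finset.mem_range] at hm
      refine der_comp_vanish δ E hE1 (hcomphom m) ?_
      have harith : a + (k + 1) * E = a + k * E + E := by ring
      omega

theorem der_top_lnd (δ D : Derivation K (MvPolynomial (Fin n) K) (MvPolynomial (Fin n) K))
    (E : ℕ) (hD : ∀ j, D (X j) = weightedHomogeneousComponent dv (dv j + E) (δ (X j)))
    (hE1 : ∀ j, weightedTotalDegree dv (δ (X j)) ≤ dv j + E)
    (hδl : ∀ x, ∃ k, (⇑δ)^[k] x = 0) :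
    ∀ x, ∃ k, (⇑D)^[k] x = 0 := by
  have hom : ∀ {a : ℕ} {Q : MvPolynomial (Fin n) K}, IsWeightedHomogeneous dv Q a →
      ∀ k0, ((⇑δ)^[k0] Q = 0) → ∀ k, k0 ≤ k → (⇑D)^[k] Q = 0 := by
    intro a Q hQ k0 h0 k hk
    rw [(der_iterate_top δ D E hD hE1 k hQ).1, iter_vanish δ h0 hk, map_zero]
  intro x
  have hdec := eq_sum_comp (u := dv) x
  have hchoice : ∀ m : ℕ, ∃ k0,
      (⇑δ)^[k0] (weightedHomogeneousComponent dv m x) = 0 := fun m => hδl _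
  choose kf hkf using hchoice
  refine ⟨(Finset.range (weightedTotalDegree dv x + 1)).sup kf, ?_⟩
  have hz : (⇑D)^[(Finset.range (weightedTotalDegree dv x + 1)).sup kf]
      (∑ m ∈ Finset.range (weightedTotalDegree dv x + 1),
        weightedHomogeneousComponent dv m x) = 0 := by
    rw [iter_sum]
    exact Finset.sum_eq_zero fun m hm =>
      hom (weightedHomogeneousComponent_isWeightedHomogeneous m x) (kf m) (hkf m) _
        (Finset.le_sup hm)
  rwa [hdec] at hz

end TopPart

section Aeval

variable {K : Type*} [CommRing K] {n : ℕ}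

theorem aeval_isWH {w : Fin n → ℕ} {g : Fin n → MvPolynomial (Fin n) K} {dv : Fin n → ℕ}
    (hg : ∀ j, IsWeightedHomogeneous w (g j) (dv j)) {a : ℕ} {P : MvPolynomial (Fin n) K}
    (hP : IsWeightedHomogeneous dv P a) :
    IsWeightedHomogeneous w ((aeval g) P) a := by
  classical
  rw [show P = ∑ α ∈ P.support, monomial α (coeff α P) from P.as_sum, map_sum]
  refine IsWeightedHomogeneous.sum _ _ _ fun α hα => ?_
  rw [aeval_monomial]
  have hwα : weight dv α = a := hP (MvPolynomial.mem_support_iff.mp hα)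
  have hprod : IsWeightedHomogeneous w (α.prod fun j k => g j ^ k) (weight dv α) := by
    rw [show (α.prod fun j k => g j ^ k) = ∏ j ∈ α.support, g j ^ (α j) from rfl,
      weight_eq_sum]
    exact IsWeightedHomogeneous.prod _ _ _ fun j _ => isWH_pow (hg j) (α j)
  rw [hwα] at hprod
  have hmul := (isWeightedHomogeneous_C w (coeff α P)).mul hprod
  rwa [zero_add, ← algebraMap_eq] at hmul

theorem aeval_comp_top {w dv : Fin n → ℕ} {f F : Fin n → MvPolynomial (Fin n) K}
    (hfd : ∀ j, weightedTotalDegree w (f j) ≤ dv j)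
    (hF : ∀ j, weightedHomogeneousComponent w (dv j) (f j) = F j)
    {a : ℕ} {P : MvPolynomial (Fin n) K} (hP : IsWeightedHomogeneous dv P a) :
    weightedTotalDegree w ((aeval f) P) ≤ a ∧
      weightedHomogeneousComponent w a ((aeval f) P) = (aeval F) P := by
  classical
  constructor
  · rw [show P = ∑ α ∈ P.support, monomial α (coeff α P) from P.as_sum, map_sum]
    refine wtd_sum_le fun α hα => ?_
    have hwα : weight dv α = a := hP (MvPolynomial.mem_support_iff.mp hα)
    rw [aeval_monomial]
    have h1 : weightedTotalDegree w (α.prod fun j k => f j ^ k) ≤ a := by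
      rw [show (α.prod fun j k => f j ^ k) = ∏ j ∈ α.support, f j ^ (α j) from rfl]
      calc weightedTotalDegree w _ ≤ ∑ j ∈ α.support, α j * dv j :=
            wtd_prod_le fun j _ => wtd_pow_le (hfd j) (α j)
        _ = a := by rw [← weight_eq_sum, hwα]
    calc weightedTotalDegree w _ ≤ _ + _ := wtd_mul_le
      _ ≤ 0 + a := by
          refine add_le_add ?_ h1
          rw [algebraMap_eq]
          exact wtd_C_le _
      _ = a := by omega
  · rw [show P = ∑ α ∈ P.support, monomial α (coeff α P) from P.as_sum,
      map_sum, map_sum, map_sum]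
    refine Finset.sum_congr rfl fun α hα => ?_
    have hwα : weight dv α = a := hP (MvPolynomial.mem_support_iff.mp hα)
    rw [aeval_monomial, aeval_monomial, algebraMap_eq, weightedHomogeneousComponent_C_mul]
    congr 1
    rw [show (α.prod fun j k => f j ^ k) = ∏ j ∈ α.support, f j ^ (α j) from rfl,
      show (α.prod fun j k => F j ^ k) = ∏ j ∈ α.support, F j ^ (α j) from rfl,
      ← hwα, weight_eq_sum,
      comp_finset_prod_top fun j _ => wtd_pow_le (hfd j) (α j)]
    exact Finset.prod_congr rfl fun j _ => by rw [comp_pow_top (hfd j) (α j), hF j]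

end Aeval

section Noeth

theorem ker_bot_of_surj {A : Type*} [CommRing A] [IsNoetherianRing A]
    (π : A →+* A) (hs : Function.Surjective π) : RingHom.ker π = ⊥ := by
  have hmono : Monotone (fun k => RingHom.ker (π ^ k)) := by
    apply monotone_nat_of_le_succ
    intro k x hx
    rw [RingHom.mem_ker] at hx ⊢
    rw [pow_succ', RingHom.coe_mul, Function.comp_apply, hx, map_zero]
  haveI hN : IsNoetherian A A := isNoetherianRing_iff.mp inferInstance
  obtain ⟨m, hm⟩ := (monotone_stabilizes_iff_noetherian.mpr hN)
    (⟨fun k => RingHom.ker (π ^ k), hmono⟩ : ℕ →o Ideal A)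
  rw [eq_bot_iff]
  intro x hx
  rw [RingHom.mem_ker] at hx
  obtain ⟨y, hy⟩ : ∃ y, π^[m] y = x := (hs.iterate m) x
  have h1 : y ∈ RingHom.ker (π ^ (m + 1)) := by
    rw [RingHom.mem_ker, pow_succ', RingHom.coe_mul, Function.comp_apply]
    rw [show (π ^ m) y = π^[m] y from by rw [RingHom.coe_pow], hy]
    exact hx
  have h2 : y ∈ RingHom.ker (π ^ m) := by
    have hmm := hm (m + 1) (by omega)
    simp only [OrderHom.coe_mk] at hmm
    rw [hmm]
    exact h1
  rw [RingHom.mem_ker] at h2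
  rw [Ideal.mem_bot, ← hy, ← RingHom.coe_pow, h2]

end Noeth

end StmtAux


open StmtAux

/-- Theorem 1: there is a nonzero locally nilpotent derivation preserving the ideal of
relations; moreover if the ideal is principal, generated by `R`, then `∂ R = 0`. -/
theorem stmt0 {K : Type*} [Field K] [IsAlgClosed K] [CharZero K]
    {n : ℕ} (hn : 0 < n) (w : Fin n → ℕ) (hw : ∀ i, 0 < w i)
    (f : Fin n → MvPolynomial (Fin n) K)
    (hf : Function.Bijective
      ⇑(aeval f : MvPolynomial (Fin n) K →ₐ[K] MvPolynomial (Fin n) K)) :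
    ∃ D : Derivation K (MvPolynomial (Fin n) K) (MvPolynomial (Fin n) K),
      D ≠ 0 ∧ IsLND D ∧ (∀ P ∈ relIdeal w f, D P ∈ relIdeal w f) ∧
      ∀ R : MvPolynomial (Fin n) K, relIdeal w f = Ideal.span {R} → D R = 0 := by
  classical
  set F : Fin n → MvPolynomial (Fin n) K := fun j => ldt w (f j) with hF
  set dv : Fin n → ℕ := fun j => weightedTotalDegree w (f j) with hdv
  have hmemker : ∀ P, P ∈ relIdeal w f ↔ (aeval (R := K) F) P = 0 := by
    intro P
    simp only [relIdeal, RingHom.mem_ker]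
    exact Iff.rfl
  have hFdef : ∀ j, weightedHomogeneousComponent w (dv j) (f j) = F j := fun j => rfl
  have hfd : ∀ j, weightedTotalDegree w (f j) ≤ dv j := fun j => le_rfl
  have hFhom : ∀ j, IsWeightedHomogeneous w (F j) (dv j) := fun j =>
    weightedHomogeneousComponent_isWeightedHomogeneous _ _
  have hfne : ∀ j, f j ≠ 0 := by
    intro j h0
    have hX0 : (X j : MvPolynomial (Fin n) K) = 0 := by
      apply hf.injective
      rw [map_zero, aeval_X, h0]
    exact X_ne_zero j hX0
  have hFne : ∀ j, F j ≠ 0 := fun j => comp_wtd_ne_zero (hfne j)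
  have hmono_pi : ∀ (α : Fin n →₀ ℕ) (c : K), c ≠ 0 → (aeval (R := K) F) (monomial α c) ≠ 0 := by
    intro α c hc
    rw [aeval_monomial]
    refine mul_ne_zero ?_ ?_
    · rw [algebraMap_eq]
      intro hC0
      apply hc
      have := congrArg (coeff 0) hC0
      simpa using this
    · rw [show (α.prod fun j k => F j ^ k) = ∏ j ∈ α.support, F j ^ (α j) from rfl]
      exact Finset.prod_ne_zero_iff.mpr fun j _ => pow_ne_zero _ (hFne j)
  by_cases hI : relIdeal w f = ⊥
  · -- trivial relations: take a partial derivative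
    refine ⟨pderiv ⟨0, hn⟩, ?_, ?_, ?_, ?_⟩
    · intro h
      have h1 : pderiv (⟨0, hn⟩ : Fin n) (X ⟨0, hn⟩ : MvPolynomial (Fin n) K) = 1 :=
        pderiv_X_self _
      rw [h] at h1
      simp at h1
    · intro a
      exact pderiv_iter_zero _ a
    · intro P hP
      rw [hI, Ideal.mem_bot] at hP ⊢
      rw [hP, map_zero]
    · intro R hR
      have hmem : R ∈ Ideal.span {R} := Ideal.mem_span_singleton_self R
      rw [← hR, hI, Ideal.mem_bot] at hmem
      rw [hmem, map_zero]
  · -- nontrivial relations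
    set φe : MvPolynomial (Fin n) K ≃ₐ[K] MvPolynomial (Fin n) K :=
      AlgEquiv.ofBijective (aeval f : MvPolynomial (Fin n) K →ₐ[K] MvPolynomial (Fin n) K)
        hf with hφe
    have hφeapp : ∀ P, φe P = (aeval (R := K) f) P := fun P => rfl
    have hφX : ∀ j, φe (X j) = f j := fun j => by rw [hφeapp, aeval_X]
    -- the two leading-form comparison lemmas
    have L3a : ∀ P, weightedTotalDegree w ((aeval (R := K) f) P) ≤ weightedTotalDegree dv P := by
      intro P
      conv_lhs => rw [← StmtAux.eq_sum_comp (u := dv) P]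
      rw [map_sum]
      refine wtd_sum_le fun m hm => ?_
      rw [Finset.mem_range] at hm
      exact le_trans
        (aeval_comp_top hfd hFdef (weightedHomogeneousComponent_isWeightedHomogeneous m P)).1
        (by omega)
    have L3c : ∀ P, weightedHomogeneousComponent w (weightedTotalDegree dv P) ((aeval (R := K) f) P)
        = (aeval (R := K) F) (weightedHomogeneousComponent dv (weightedTotalDegree dv P) P) := by
      intro P
      have hsum : (aeval (R := K) f) P = ∑ m ∈ Finset.range (weightedTotalDegree dv P + 1),
          (aeval (R := K) f) (weightedHomogeneousComponent dv m P) := by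
        conv_lhs => rw [← StmtAux.eq_sum_comp (u := dv) P]
        rw [map_sum]
      rw [hsum, map_sum, Finset.sum_range_succ]
      have hz : ∑ m ∈ Finset.range (weightedTotalDegree dv P), weightedHomogeneousComponent w
          (weightedTotalDegree dv P) ((aeval (R := K) f) (weightedHomogeneousComponent dv m P)) = 0 :=
        Finset.sum_eq_zero fun m hm => weightedHomogeneousComponent_eq_zero _ _
          (lt_of_le_of_lt
            (aeval_comp_top hfd hFdef
              (weightedHomogeneousComponent_isWeightedHomogeneous m P)).1
            (Finset.mem_range.mp hm))
      rw [hz, zero_add,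
        (aeval_comp_top hfd hFdef
          (weightedHomogeneousComponent_isWeightedHomogeneous _ P)).2]
    -- n ≥ 2
    have hn2 : 2 ≤ n := by
      by_contra hlt
      have hn1 : n = 1 := by omega
      subst hn1
      apply hI
      -- in one variable the ideal of relations is trivial
      have hwone : ∀ β : Fin 1 →₀ ℕ, Finsupp.weight dv β = β 0 * dv 0 := by
        intro β
        rw [StmtAux.weight_eq_sum]
        by_cases hβ : β 0 = 0
        · have hsupp : β.support = ∅ := by
            ext j
            have hj : j = 0 := Subsingleton.elim _ _
            simp [Finsupp.mem_support_iff, hj, hβ]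
          rw [hsupp, Finset.sum_empty, hβ, zero_mul]
        · have hsupp : β.support = {0} := by
            ext j
            have hj : j = 0 := Subsingleton.elim _ _
            simp [Finsupp.mem_support_iff, hj, hβ]
          rw [hsupp, Finset.sum_singleton]
      have hd1 : dv 0 ≠ 0 := by
        intro h0
        -- then f 0 is constant and aeval f cannot be surjective
        have hsupp : ∀ α ∈ (f 0).support, α = 0 := by
          intro α hα
          have hw0 : Finsupp.weight w α = 0 := le_antisymm (by
            have := le_weightedTotalDegree w hα
            rw [hdv] at h0
            simp only at h0
            omega) (Nat.zero_le _)
          rw [StmtAux.weight_eq_sum] at hw0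
          have hes : α.support = ∅ := by
            by_contra hne
            obtain ⟨j, hj⟩ := Finset.nonempty_iff_ne_empty.mpr hne
            have hterm := (Finset.sum_eq_zero_iff.mp hw0) j hj
            have hαj : α j ≠ 0 := Finsupp.mem_support_iff.mp hj
            rcases Nat.mul_eq_zero.mp hterm with h | h
            · exact hαj h
            · exact (hw j).ne' h
          exact Finsupp.support_eq_empty.mp hes
        have hfC : f 0 = C (coeff 0 (f 0)) := by
          have h1 := (f 0).as_sum
          rcases Finset.subset_singleton_iff.mp
            (fun α hα => Finset.mem_singleton.mpr (hsupp α hα)) with he | he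
          · rw [he, Finset.sum_empty] at h1
            rw [h1]
            simp
          · rw [he, Finset.sum_singleton] at h1
            exact h1.trans (by rw [monomial_zero'])
        have hrange : ∀ Q : MvPolynomial (Fin 1) K, ∃ c, (aeval (R := K) f) Q = C c := by
          intro Q
          induction Q using MvPolynomial.induction_on with
          | C c => exact ⟨c, by rw [aeval_C, algebraMap_eq]⟩
          | add p q hp hq =>
            obtain ⟨a, ha⟩ := hp
            obtain ⟨b, hb⟩ := hq
            exact ⟨a + b, by rw [map_add, ha, hb, map_add]⟩
          | mul_X p j hp =>
            obtain ⟨a, ha⟩ := hp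
            have hj : j = 0 := Subsingleton.elim _ _
            refine ⟨a * coeff 0 (f 0), ?_⟩
            rw [map_mul, ha, aeval_X, hj]
            conv_lhs => rw [hfC]
            rw [← C_mul]
        obtain ⟨P, hPX⟩ := hf.surjective (X 0)
        obtain ⟨c, hc⟩ := hrange P
        rw [hPX] at hc
        have h1 := congrArg (coeff (Finsupp.single 0 1)) hc
        rw [coeff_C, if_neg (by
          intro h0'
          have := congrArg (fun β : Fin 1 →₀ ℕ => β 0) h0'
          simp at this)] at h1
        rw [MvPolynomial.coeff_X, if_pos rfl] at h1
        exact one_ne_zero h1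
      rw [eq_bot_iff]
      intro P hP
      have hπP : (aeval (R := K) F) P = 0 := (hmemker P).mp hP
      rw [Ideal.mem_bot]
      have hcompz : ∀ b, (aeval (R := K) F) (weightedHomogeneousComponent dv b P) = 0 := by
        intro b
        by_cases hble : b ≤ weightedTotalDegree dv P
        · have hsum0 : ∑ m ∈ Finset.range (weightedTotalDegree dv P + 1),
              (aeval (R := K) F) (weightedHomogeneousComponent dv m P) = 0 := by
            rw [← map_sum, StmtAux.eq_sum_comp, hπP]
          have hsum1 := congrArg (weightedHomogeneousComponent w b) hsum0
          rw [map_sum, map_zero] at hsum1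
          have hterm : ∀ m ∈ Finset.range (weightedTotalDegree dv P + 1),
              weightedHomogeneousComponent w b
                ((aeval (R := K) F) (weightedHomogeneousComponent dv m P)) =
              if b = m then (aeval (R := K) F) (weightedHomogeneousComponent dv b P) else 0 := by
            intro m hm
            have hhom : IsWeightedHomogeneous w
                ((aeval (R := K) F) (weightedHomogeneousComponent dv m P)) m :=
              aeval_isWH hFhom (weightedHomogeneousComponent_isWeightedHomogeneous m P)
            by_cases hmb : b = m
            · subst hmb
              rw [if_pos rfl]
              exact hhom.weightedHomogeneousComponent_same
            · rw [if_neg hmb]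
              exact hhom.weightedHomogeneousComponent_ne b hmb
          rw [Finset.sum_congr rfl hterm,
            Finset.sum_ite_eq (Finset.range (weightedTotalDegree dv P + 1)) b] at hsum1
          rw [if_pos (by rw [Finset.mem_range]; omega)] at hsum1
          exact hsum1
        · rw [weightedHomogeneousComponent_eq_zero _ _ (by omega), map_zero]
      have hcomp0 : ∀ b, weightedHomogeneousComponent dv b P = 0 := by
        intro b
        by_contra hSne
        have hhom : IsWeightedHomogeneous dv (weightedHomogeneousComponent dv b P) b :=
          weightedHomogeneousComponent_isWeightedHomogeneous b P
        obtain ⟨α, hα⟩ := MvPolynomial.support_nonempty.mpr hSne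
        have hall : ∀ β ∈ (weightedHomogeneousComponent dv b P).support, β = α := by
          intro β hβ
          have h1 : Finsupp.weight dv β = b := hhom (MvPolynomial.mem_support_iff.mp hβ)
          have h2 : Finsupp.weight dv α = b := hhom (MvPolynomial.mem_support_iff.mp hα)
          rw [hwone] at h1 h2
          have h3 : β 0 = α 0 :=
            Nat.eq_of_mul_eq_mul_right (Nat.pos_of_ne_zero hd1) (by omega)
          refine Finsupp.ext fun j => ?_
          have hj : j = (0 : Fin 1) := Subsingleton.elim _ _
          rw [hj]
          exact h3
        have hSm : weightedHomogeneousComponent dv b P =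
            monomial α (coeff α (weightedHomogeneousComponent dv b P)) := by
          have h1 := (weightedHomogeneousComponent dv b P).as_sum
          rcases Finset.subset_singleton_iff.mp
            (fun β hβ => Finset.mem_singleton.mpr (hall β hβ)) with he | he
          · rw [he] at h1
            rw [Finset.sum_empty] at h1
            exact absurd h1 hSne
          · rw [he, Finset.sum_singleton] at h1
            exact h1
        have hcne : coeff α (weightedHomogeneousComponent dv b P) ≠ 0 :=
          MvPolynomial.mem_support_iff.mp hα
        have := hcompz b
        rw [hSm] at this
        exact hmono_pi α _ hcne this
      rw [← StmtAux.eq_sum_comp (u := dv) P]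
      exact Finset.sum_eq_zero fun m _ => hcomp0 m
    -- existence of a good pair (i, q0)
    have hEX : ∃ (i : Fin n) (q0 : MvPolynomial (Fin n) K), q0 ≠ 0 ∧ pderiv i q0 = 0 ∧
        weightedTotalDegree w q0 + 1 ≤ weightedTotalDegree dv (φe.symm q0) := by
      by_contra hcon
      push_neg at hcon
      apply hI
      haveI : Nontrivial (Fin n) := Fin.nontrivial_iff_two_le.mpr hn2
      have hXrange : ∀ j, ∃ Pj, (aeval (R := K) F) Pj = (X j : MvPolynomial (Fin n) K) := by
        intro j
        obtain ⟨i2, hij⟩ := exists_ne j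
        have hXne : (X j : MvPolynomial (Fin n) K) ≠ 0 := X_ne_zero j
        have hpd : pderiv i2 (X j : MvPolynomial (Fin n) K) = 0 :=
          pderiv_X_of_ne (Ne.symm hij)
        have hlt := hcon i2 (X j) hXne hpd
        have hXhom : IsWeightedHomogeneous w (X j : MvPolynomial (Fin n) K) (w j) :=
          isWeightedHomogeneous_X K w j
        have hXwtd : weightedTotalDegree w (X j : MvPolynomial (Fin n) K) = w j :=
          wtd_of_isWH hXne hXhom
        have hback : (aeval (R := K) f) (φe.symm (X j)) = X j := by
          rw [← hφeapp, AlgEquiv.apply_symm_apply]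
        have hge : weightedTotalDegree w (X j : MvPolynomial (Fin n) K) ≤
            weightedTotalDegree dv (φe.symm (X j)) := by
          have := L3a (φe.symm (X j))
          rw [hback] at this
          exact this
        have hEq : weightedTotalDegree dv (φe.symm (X j)) =
            weightedTotalDegree w (X j : MvPolynomial (Fin n) K) := by omega
        have hkey := L3c (φe.symm (X j))
        rw [hback, hEq, hXwtd] at hkey
        rw [hXhom.weightedHomogeneousComponent_same] at hkey
        exact ⟨_, hkey.symm⟩
      have hsur : Function.Surjective ⇑(aeval F :
          MvPolynomial (Fin n) K →ₐ[K] MvPolynomial (Fin n) K) := by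
        intro p
        induction p using MvPolynomial.induction_on with
        | C c => exact ⟨C c, by rw [aeval_C, algebraMap_eq]⟩
        | add p q hp hq =>
          obtain ⟨a, ha⟩ := hp
          obtain ⟨b, hb⟩ := hq
          exact ⟨a + b, by rw [map_add, ha, hb]⟩
        | mul_X p j hp =>
          obtain ⟨a, ha⟩ := hp
          obtain ⟨Pj, hPj⟩ := hXrange j
          exact ⟨a * Pj, by rw [map_mul, ha, hPj]⟩
      have hker := ker_bot_of_surj
        ((aeval F : MvPolynomial (Fin n) K →ₐ[K] MvPolynomial (Fin n) K) :
          MvPolynomial (Fin n) K →+* MvPolynomial (Fin n) K) hsur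
      rw [eq_bot_iff]
      intro P hP
      rw [← hker, RingHom.mem_ker]
      exact (hmemker P).mp hP
    obtain ⟨i, q0, hq0ne, hq0p, hgap⟩ := hEX
    -- some f j0 depends on x i
    have hj0ex : ∃ j0, pderiv i (f j0) ≠ 0 := by
      by_contra hc
      push_neg at hc
      have hzero : conjDer φe 1 i = 0 := by
        apply derivation_ext
        intro j
        rw [conjDer_apply, hφX, hc j, mul_zero, map_zero]
        rfl
      have h1 : conjDer φe 1 i (φe.symm (X i)) = 1 := by
        rw [conjDer_apply, AlgEquiv.apply_symm_apply, one_mul, pderiv_X_self, map_one]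
      rw [hzero] at h1
      simp at h1
    obtain ⟨j0, hj0⟩ := hj0ex
    set N : ℕ := dv j0 + w i + 1 with hN
    set g : MvPolynomial (Fin n) K := q0 ^ N with hg
    have hgp : pderiv i g = 0 := by
      rw [hg, Derivation.leibniz_pow, hq0p]
      simp
    set δ := conjDer φe g i with hδ
    set NX := N * weightedTotalDegree w q0 with hNX
    set E : ℕ := Finset.univ.sup (fun j => weightedTotalDegree dv (δ (X j)) - dv j) with hE
    have hE1 : ∀ j, weightedTotalDegree dv (δ (X j)) ≤ dv j + E := by
      intro j
      have hle : weightedTotalDegree dv (δ (X j)) - dv j ≤ E :=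
        Finset.le_sup (f := fun j => weightedTotalDegree dv (δ (X j)) - dv j)
          (Finset.mem_univ j)
      omega
    have hHne : φe.symm q0 ≠ 0 := fun h0 => hq0ne (by
      rw [← AlgEquiv.apply_symm_apply φe q0, h0, map_zero])
    have hUne : φe.symm (pderiv i (f j0)) ≠ 0 := fun h0 => hj0 (by
      rw [← AlgEquiv.apply_symm_apply φe (pderiv i (f j0)), h0, map_zero])
    have hδj0 : δ (X j0) = (φe.symm q0) ^ N * φe.symm (pderiv i (f j0)) := by
      rw [hδ, conjDer_apply, hφX, hg, map_mul, map_pow]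
    have hElow : NX + w i + 1 ≤ E := by
      have h1 : weightedTotalDegree dv (δ (X j0)) =
          N * weightedTotalDegree dv (φe.symm q0) +
            weightedTotalDegree dv (φe.symm (pderiv i (f j0))) := by
        rw [hδj0, wtd_mul (pow_ne_zero _ hHne) hUne, wtd_pow hHne]
      have h2 : weightedTotalDegree dv (δ (X j0)) - dv j0 ≤ E :=
        Finset.le_sup (f := fun j => weightedTotalDegree dv (δ (X j)) - dv j)
          (Finset.mem_univ j0)
      have h4 : NX + N ≤ weightedTotalDegree dv (δ (X j0)) := by
        calc NX + N = N * (weightedTotalDegree w q0 + 1) := by rw [hNX]; ring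
          _ ≤ N * weightedTotalDegree dv (φe.symm q0) := mul_le_mul_right hgap N
          _ ≤ N * weightedTotalDegree dv (φe.symm q0) +
              weightedTotalDegree dv (φe.symm (pderiv i (f j0))) := Nat.le_add_right _ _
          _ = weightedTotalDegree dv (δ (X j0)) := h1.symm
      omega
    have hE2 : ∃ js, weightedTotalDegree dv (δ (X js)) = dv js + E ∧ δ (X js) ≠ 0 := by
      haveI : Nonempty (Fin n) := ⟨⟨0, hn⟩⟩
      obtain ⟨js, _, hjseq⟩ := Finset.exists_mem_eq_sup Finset.univ Finset.univ_nonempty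
        (fun j => weightedTotalDegree dv (δ (X j)) - dv j)
      have hjseq' : E = weightedTotalDegree dv (δ (X js)) - dv js := hjseq
      have hEpos : 1 ≤ E := by omega
      have hwne : weightedTotalDegree dv (δ (X js)) = dv js + E := by omega
      refine ⟨js, hwne, ?_⟩
      intro h0
      rw [h0] at hwne
      have hz : weightedTotalDegree dv (0 : MvPolynomial (Fin n) K) = 0 := by
        rw [weightedTotalDegree_zero]
        rfl
      omega
    obtain ⟨js, hjs_eq, hjs_ne⟩ := hE2
    set D := mkDerivation K
      (fun j => weightedHomogeneousComponent dv (dv j + E) (δ (X j))) with hD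
    have hDX : ∀ j, D (X j) = weightedHomogeneousComponent dv (dv j + E) (δ (X j)) := by
      intro j
      rw [hD]
      exact mkDerivation_X (R := K) (fun j => weightedHomogeneousComponent dv (dv j + E) (δ (X j))) j
    have hδlnd : ∀ y, ∃ k, (⇑δ)^[k] y = 0 := fun y => conjDer_lnd φe g i hgp y
    have hDlnd : ∀ x, ∃ k, (⇑D)^[k] x = 0 := der_top_lnd δ D E hDX hE1 hδlnd
    have hDim : ∀ P, D P ∈ relIdeal w f := by
      have hkey : ∀ (α : Fin n →₀ ℕ) (c : K), (aeval (R := K) F) (D (monomial α c)) = 0 := by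
        intro α c
        set a := Finsupp.weight dv α with ha
        have hQhom : IsWeightedHomogeneous dv (monomial α c) a :=
          isWeightedHomogeneous_monomial _ _ _ ha.symm
        have hDQ : D (monomial α c) =
            weightedHomogeneousComponent dv (a + E) (δ (monomial α c)) :=
          der_comp_top δ D E hDX hQhom
        by_cases hz : D (monomial α c) = 0
        · rw [hz, map_zero]
        by_contra hne
        have hDhom : IsWeightedHomogeneous dv (D (monomial α c)) (a + E) := by
          rw [hDQ]
          exact weightedHomogeneousComponent_isWeightedHomogeneous _ _
        have hφδ : (aeval (R := K) f) (δ (monomial α c)) =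
            g * pderiv i ((aeval (R := K) f) (monomial α c)) := by
          rw [show (aeval (R := K) f) (δ (monomial α c)) = φe (δ (monomial α c)) from rfl, hδ,
            conjDer_apply, AlgEquiv.apply_symm_apply]
          rfl
        have hvan : ∀ b, a + E < b →
            weightedHomogeneousComponent dv b (δ (monomial α c)) = 0 :=
          fun b hb => der_comp_vanish δ E hE1 hQhom hb
        have hdecδ : ∑ m ∈ Finset.range (a + E + 1),
            weightedHomogeneousComponent dv m (δ (monomial α c)) = δ (monomial α c) :=
          StmtAux.eq_sum_comp_of_vanish hvan
        have h2 : weightedHomogeneousComponent w (a + E) ((aeval (R := K) f) (δ (monomial α c))) =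
            (aeval (R := K) F) (D (monomial α c)) := by
          conv_lhs => rw [← hdecδ]
          rw [map_sum, map_sum, Finset.sum_range_succ]
          have hz2 : ∑ m ∈ Finset.range (a + E), weightedHomogeneousComponent w (a + E)
              ((aeval (R := K) f) (weightedHomogeneousComponent dv m (δ (monomial α c)))) = 0 :=
            Finset.sum_eq_zero fun m hm => weightedHomogeneousComponent_eq_zero _ _
              (lt_of_le_of_lt
                (aeval_comp_top hfd hFdef
                  (weightedHomogeneousComponent_isWeightedHomogeneous m _)).1
                (Finset.mem_range.mp hm))
          rw [hz2, zero_add,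
            (aeval_comp_top hfd hFdef
              (weightedHomogeneousComponent_isWeightedHomogeneous (a + E) _)).2, ← hDQ]
        rw [hφδ] at h2
        have hpne : pderiv i ((aeval (R := K) f) (monomial α c)) ≠ 0 := by
          intro h0
          rw [h0, mul_zero, map_zero] at h2
          exact hne h2.symm
        have h3 : a + E ≤ weightedTotalDegree w
            (g * pderiv i ((aeval (R := K) f) (monomial α c))) := by
          by_contra hlt
          push_neg at hlt
          rw [weightedHomogeneousComponent_eq_zero _ _ hlt] at h2
          exact hne h2.symm
        have h4 : weightedTotalDegree w ((aeval (R := K) f) (monomial α c)) ≤ a := by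
          have := (aeval_comp_top hfd hFdef hQhom).1
          exact this
        have h5 : weightedTotalDegree w (g * pderiv i ((aeval (R := K) f) (monomial α c))) ≤
            NX + weightedTotalDegree w (pderiv i ((aeval (R := K) f) (monomial α c))) := by
          refine le_trans wtd_mul_le (add_le_add ?_ le_rfl)
          rw [hNX, hg]
          exact wtd_pow_le le_rfl N
        have h6 := wtd_pderiv (u := w) i hpne
        omega
      intro P
      refine (hmemker _).mpr ?_
      rw [show P = ∑ α ∈ P.support, monomial α (coeff α P) from P.as_sum,
        map_sum, map_sum]
      exact Finset.sum_eq_zero fun α _ => hkey α _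
    refine ⟨D, ?_, ?_, ?_, ?_⟩
    · intro h0
      have h1 : D (X js) = 0 := by rw [h0]; rfl
      rw [hDX js, ← hjs_eq] at h1
      exact comp_wtd_ne_zero hjs_ne h1
    · intro x
      exact hDlnd x
    · intro P _
      exact hDim P
    · intro R0 hR0
      have hR0ne : R0 ≠ 0 := by
        intro h0
        rw [h0, Ideal.span_singleton_eq_bot.mpr rfl] at hR0
        exact hI hR0
      have hdvd : R0 ∣ D R0 := by
        have hmem := hDim R0
        rw [hR0] at hmem
        exact Ideal.mem_span_singleton.mp hmem
      obtain ⟨S, hS⟩ := hdvd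
      exact derivation_eq_zero_of_dvd D hDlnd hS
end

section
/- Let Φ=(f_1,…,f_n) be a polynomial automorphism of K^n and deg_1 a p.w.h. degree. For every polynomial P ∈ K[x_1,…,x_n], one has deg_1(P∘Φ) ≤ deg_2(P), and this inequality is strict if and only if P ≠ 0 and P̃ belongs to the ideal of relations I. -/
open MvPolynomial Finsupp

section Aux

variable {R : Type*} [CommRing R] {σ : Type*}

lemma wtd'_le_iff (w : σ → ℕ) (p : MvPolynomial σ R) (m : ℕ) :
    weightedTotalDegree' w p ≤ (m : WithBot ℕ) ↔ ∀ s ∈ p.support, weight w s ≤ m := by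
  simp only [weightedTotalDegree', Finset.sup_le_iff, MvPolynomial.mem_support_iff]
  simp [Nat.cast_withBot, WithBot.coe_le_coe, WithBot.coe_lt_coe]

lemma wtd'_lt_iff (w : σ → ℕ) (p : MvPolynomial σ R) (m : ℕ) :
    weightedTotalDegree' w p < (m : WithBot ℕ) ↔ ∀ s ∈ p.support, weight w s < m := by
  simp only [weightedTotalDegree', Finset.sup_lt_iff (WithBot.bot_lt_coe m),
    MvPolynomial.mem_support_iff]
  simp [Nat.cast_withBot, WithBot.coe_le_coe, WithBot.coe_lt_coe]

lemma comp_eq_zero_iff (w : σ → ℕ) (p : MvPolynomial σ R) (m : ℕ) :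
    weightedHomogeneousComponent w m p = 0 ↔ ∀ s ∈ p.support, weight w s ≠ m := by
  classical
  constructor
  · intro h s hs hws
    have h2 := coeff_weightedHomogeneousComponent (w := w) m p s
    rw [h, if_pos hws, coeff_zero] at h2
    exact MvPolynomial.mem_support_iff.mp hs h2.symm
  · exact weightedHomogeneousComponent_eq_zero' m p

lemma comp_mul_zero_left (w : σ → ℕ) {x y : MvPolynomial σ R} {p q : ℕ}
    (hx : ∀ s ∈ x.support, weight w s < p)
    (hy : ∀ s ∈ y.support, weight w s ≤ q) :
    weightedHomogeneousComponent w (p + q) (x * y) = 0 := by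
  classical
  apply weightedHomogeneousComponent_eq_zero'
  intro s hs
  obtain ⟨u, hu, v, hv, rfl⟩ := Finset.mem_add.mp (support_mul x y hs)
  rw [map_add]
  exact ne_of_lt (add_lt_add_of_lt_of_le (hx u hu) (hy v hv))

lemma comp_mul_zero_right (w : σ → ℕ) {x y : MvPolynomial σ R} {p q : ℕ}
    (hx : ∀ s ∈ x.support, weight w s ≤ p)
    (hy : ∀ s ∈ y.support, weight w s < q) :
    weightedHomogeneousComponent w (p + q) (x * y) = 0 := by
  classical
  apply weightedHomogeneousComponent_eq_zero'
  intro s hs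
  obtain ⟨u, hu, v, hv, rfl⟩ := Finset.mem_add.mp (support_mul x y hs)
  rw [map_add]
  exact ne_of_lt (add_lt_add_of_le_of_lt (hx u hu) (hy v hv))

lemma support_sub_comp (w : σ → ℕ) (a : MvPolynomial σ R) (p : ℕ)
    (ha : ∀ s ∈ a.support, weight w s ≤ p) :
    ∀ s ∈ (a - weightedHomogeneousComponent w p a).support, weight w s < p := by
  classical
  intro s hs
  rw [MvPolynomial.mem_support_iff, coeff_sub, coeff_weightedHomogeneousComponent] at hs
  split_ifs at hs with h
  · simp at hs
  · rw [sub_zero] at hs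
    exact lt_of_le_of_ne (ha s (MvPolynomial.mem_support_iff.mpr hs)) h

lemma comp_mul (w : σ → ℕ) {a b : MvPolynomial σ R} {p q : ℕ}
    (ha : ∀ s ∈ a.support, weight w s ≤ p)
    (hb : ∀ s ∈ b.support, weight w s ≤ q) :
    (∀ s ∈ (a * b).support, weight w s ≤ p + q) ∧
      weightedHomogeneousComponent w (p + q) (a * b) =
        weightedHomogeneousComponent w p a * weightedHomogeneousComponent w q b := by
  classical
  constructor
  · intro s hs
    obtain ⟨u, hu, v, hv, rfl⟩ := Finset.mem_add.mp (support_mul a b hs)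
    rw [map_add]
    exact add_le_add (ha u hu) (hb v hv)
  · set a1 := weightedHomogeneousComponent w p a with ha1def
    set b1 := weightedHomogeneousComponent w q b with hb1def
    have ha1 : ∀ s ∈ a1.support, weight w s ≤ p := fun s hs =>
      le_of_eq ((weightedHomogeneousComponent_isWeightedHomogeneous p a) (MvPolynomial.mem_support_iff.mp hs))
    have hb1 : ∀ s ∈ b1.support, weight w s ≤ q := fun s hs =>
      le_of_eq ((weightedHomogeneousComponent_isWeightedHomogeneous q b) (MvPolynomial.mem_support_iff.mp hs))
    have ha2 := support_sub_comp w a p ha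
    have hb2 := support_sub_comp w b q hb
    have expand : a * b = a1 * b1 + (a1 * (b - b1) + ((a - a1) * b1 + (a - a1) * (b - b1))) := by
      ring
    rw [expand, map_add, map_add, map_add]
    rw [comp_mul_zero_right w ha1 hb2, comp_mul_zero_left w ha2 hb1,
      comp_mul_zero_left w ha2 (fun s hs => le_of_lt (hb2 s hs))]
    have h11 : IsWeightedHomogeneous w (a1 * b1) (p + q) :=
      (weightedHomogeneousComponent_isWeightedHomogeneous p a).mul
        (weightedHomogeneousComponent_isWeightedHomogeneous q b)
    rw [h11.weightedHomogeneousComponent_same]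
    ring

lemma comp_prod (w : σ → ℕ) {ι : Type*} [DecidableEq ι] (s : Finset ι)
    (g : ι → MvPolynomial σ R) (m : ι → ℕ)
    (hg : ∀ i ∈ s, ∀ t ∈ (g i).support, weight w t ≤ m i) :
    (∀ t ∈ (∏ i ∈ s, g i).support, weight w t ≤ ∑ i ∈ s, m i) ∧
    weightedHomogeneousComponent w (∑ i ∈ s, m i) (∏ i ∈ s, g i) =
      ∏ i ∈ s, weightedHomogeneousComponent w (m i) (g i) := by
  classical
  induction s using Finset.induction with
  | empty =>
    constructor
    · intro t ht
      have : t = 0 := by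
        simpa using support_monomial_subset (s := (0 : σ →₀ ℕ)) (a := (1 : R))
          (by simpa using ht)
      simp [this]
    · simp [(isWeightedHomogeneous_one R w).weightedHomogeneousComponent_same]
  | insert i s' hi ih =>
    have hgi := hg i (Finset.mem_insert_self i s')
    have ih' := ih (fun j hj => hg j (Finset.mem_insert_of_mem hj))
    rw [Finset.prod_insert hi, Finset.sum_insert hi]
    have := comp_mul w hgi ih'.1
    refine ⟨this.1, ?_⟩
    rw [this.2, ih'.2, Finset.prod_insert hi]

lemma comp_pow (w : σ → ℕ) (g : MvPolynomial σ R) (m k : ℕ)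
    (hg : ∀ t ∈ g.support, weight w t ≤ m) :
    (∀ t ∈ (g ^ k).support, weight w t ≤ k * m) ∧
    weightedHomogeneousComponent w (k * m) (g ^ k) =
      (weightedHomogeneousComponent w m g) ^ k := by
  have := comp_prod w (Finset.range k) (fun _ => g) (fun _ => m) (fun _ _ => hg)
  simpa [Finset.prod_const, Finset.sum_const, Finset.card_range, smul_eq_mul] using this

end Aux

section Main

variable {K : Type*} [CommRing K] {n : ℕ}

lemma comp_monomial (w : Fin n → ℕ) (f : Fin n → MvPolynomial (Fin n) K)
    (d : Fin n → ℕ) (hd : ∀ i, ∀ t ∈ (f i).support, weight w t ≤ d i)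
    (α : Fin n →₀ ℕ) :
    (∀ t ∈ (α.prod fun i k => f i ^ k).support, weight w t ≤ weight d α) ∧
    weightedHomogeneousComponent w (weight d α) (α.prod fun i k => f i ^ k) =
      α.prod fun i k => (weightedHomogeneousComponent w (d i) (f i)) ^ k := by
  classical
  have hw : weight d α = ∑ i ∈ α.support, α i * d i := by
    simp [weight_apply, Finsupp.sum, smul_eq_mul]
  rw [Finsupp.prod, Finsupp.prod, hw]
  have := comp_prod w α.support (fun i => f i ^ α i) (fun i => α i * d i)
    (fun i _ => (comp_pow w (f i) (d i) (α i) (hd i)).1)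
  refine ⟨this.1, ?_⟩
  rw [this.2]
  exact Finset.prod_congr rfl fun i _ => (comp_pow w (f i) (d i) (α i) (hd i)).2

lemma comp_aeval (w : Fin n → ℕ) (f : Fin n → MvPolynomial (Fin n) K)
    (d : Fin n → ℕ) (hd : ∀ i, ∀ t ∈ (f i).support, weight w t ≤ d i)
    (P : MvPolynomial (Fin n) K) (D : ℕ) (hP : ∀ α ∈ P.support, weight d α ≤ D) :
    (∀ t ∈ (aeval f P : MvPolynomial (Fin n) K).support, weight w t ≤ D) ∧
    weightedHomogeneousComponent w D (aeval f P) =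
      aeval (fun i => weightedHomogeneousComponent w (d i) (f i))
        (weightedHomogeneousComponent d D P) := by
  classical
  have hrep : (aeval f P : MvPolynomial (Fin n) K) =
      ∑ α ∈ P.support, C (coeff α P) * α.prod (fun i k => f i ^ k) := by
    conv_lhs => rw [← support_sum_monomial_coeff P]
    rw [map_sum]
    exact Finset.sum_congr rfl fun α _ => by rw [aeval_monomial, algebraMap_eq]
  constructor
  · intro t ht
    rw [hrep] at ht
    obtain ⟨α, hα, ht⟩ := Finset.mem_biUnion.mp (support_sum ht)
    have ht' : t ∈ (α.prod fun i k => f i ^ k).support := by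
      have := support_smul (a := coeff α P) (f := α.prod fun i k => f i ^ k)
      rw [← C_mul'] at this
      exact this ht
    exact le_trans ((comp_monomial w f d hd α).1 t ht') (hP α hα)
  · rw [hrep, map_sum, weightedHomogeneousComponent_apply, map_sum, Finset.sum_filter]
    refine Finset.sum_congr rfl fun α hα => ?_
    rw [weightedHomogeneousComponent_C_mul]
    by_cases h : weight d α = D
    · rw [if_pos h, aeval_monomial, algebraMap_eq, ← h, (comp_monomial w f d hd α).2]
    · rw [if_neg h]
      have hz : weightedHomogeneousComponent w D (α.prod fun i k => f i ^ k) = 0 := by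
        apply weightedHomogeneousComponent_eq_zero'
        intro t ht
        exact ne_of_lt (lt_of_le_of_lt ((comp_monomial w f d hd α).1 t ht)
          (lt_of_le_of_ne (hP α hα) h))
      rw [hz, mul_zero]

end Main

/-- Lemma: `deg₁(P∘Φ) ≤ deg₂ P` (degrees in `WithBot ℕ`, so `deg 0 = ⊥`), with strict
inequality if and only if `P ≠ 0` and the `deg₂`-leading term of `P` lies in the ideal
of relations. -/
theorem stmt7 {K : Type*} [Field K] [IsAlgClosed K] [CharZero K]
    {n : ℕ} (w : Fin n → ℕ) (hw : ∀ i, 0 < w i)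
    (f : Fin n → MvPolynomial (Fin n) K)
    (hf : Function.Bijective
      ⇑(aeval f : MvPolynomial (Fin n) K →ₐ[K] MvPolynomial (Fin n) K))
    (d : Fin n → ℕ) (hd : ∀ i, d i = weightedTotalDegree w (f i))
    (P : MvPolynomial (Fin n) K) :
    weightedTotalDegree' w (aeval f P) ≤ weightedTotalDegree' d P ∧
    (weightedTotalDegree' w (aeval f P) < weightedTotalDegree' d P ↔
      P ≠ 0 ∧ ldt d P ∈ relIdeal w f) := by
  classical
  have hd' : ∀ i, ∀ t ∈ (f i).support, weight w t ≤ d i := by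
    intro i t ht
    rw [hd i]
    exact le_weightedTotalDegree w ht
  by_cases hP : P = 0
  · subst hP
    simp [weightedTotalDegree'_zero]
  · set D := weightedTotalDegree d P with hD
    have hPd : weightedTotalDegree' d P = (D : WithBot ℕ) := weightedTotalDegree_coe d P hP
    have main := comp_aeval w f d hd' P D (fun α h => le_weightedTotalDegree d h)
    have hle : weightedTotalDegree' w (aeval f P) ≤ weightedTotalDegree' d P := by
      rw [hPd]
      exact (wtd'_le_iff w _ D).mpr main.1
    refine ⟨hle, ?_⟩
    rw [hPd, wtd'_lt_iff]
    have hlt : (∀ s ∈ (aeval f P : MvPolynomial (Fin n) K).support, weight w s < D) ↔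
        weightedHomogeneousComponent w D (aeval f P) = 0 := by
      rw [comp_eq_zero_iff]
      exact forall₂_congr fun t ht =>
        ⟨ne_of_lt, fun h => lt_of_le_of_ne (main.1 t ht) h⟩
    rw [hlt, main.2]
    have hldt : ldt d P = weightedHomogeneousComponent d D P := rfl
    have hf' : (fun i => ldt w (f i)) =
        fun i => weightedHomogeneousComponent w (d i) (f i) := by
      funext i
      rw [ldt, hd i]
    rw [relIdeal, RingHom.mem_ker]
    constructor
    · intro h
      refine ⟨hP, ?_⟩
      show (aeval (fun i => ldt w (f i)) : MvPolynomial (Fin n) K →ₐ[K] _) (ldt d P) = 0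
      rw [hf', hldt]
      exact h
    · rintro ⟨-, h⟩
      rw [hf', hldt] at h
      exact h
end

section
/- Let Φ=(f_1,…,f_n) be a polynomial automorphism of K^n with inverse Φ^{-1}=(g_1,…,g_n) and Jacobian determinant λ ∈ K*. For i = 1,…,n define δ_i(P) = λ^{-1}·∂P/∂x_i and Δ_i(P) = j(g_1,…,g_{i-1},P,g_{i+1},…,g_n). Then for every index i and every polynomial P: Δ_i(P∘Φ^{-1}) = δ_i(P)∘Φ^{-1} and Δ_i(P)∘Φ = δ_i(P∘Φ); moreover every derivation Δ_i is locally nilpotent. -/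
open MvPolynomial

/-- The Jacobian determinant of an `n`-tuple of polynomials in `n` variables. -/
noncomputable def jacDet {K : Type*} [CommRing K] {n : ℕ}
    (P : Fin n → MvPolynomial (Fin n) K) : MvPolynomial (Fin n) K :=
  Matrix.det (Matrix.of fun i j => pderiv j (P i))

/-- Chain rule for partial derivatives of a substitution. -/
lemma chain_rule_aux {K : Type*} [CommRing K] {n : ℕ}
    (g : Fin n → MvPolynomial (Fin n) K) (j : Fin n) (P : MvPolynomial (Fin n) K) :
    pderiv j (aeval g P) = ∑ m, aeval g (pderiv m P) * pderiv j (g m) := by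
  induction P using MvPolynomial.induction_on with
  | C a => simp
  | add p q hp hq =>
      simp only [map_add, hp, hq, add_mul, Finset.sum_add_distrib]
  | mul_X p m hp =>
      have hx : ∀ k : Fin n, (pderiv k (X m : MvPolynomial (Fin n) K))
          = if k = m then 1 else 0 := by
        intro k
        rcases eq_or_ne k m with rfl | h
        · simp
        · simp [pderiv_X_of_ne h.symm, h]
      calc pderiv j (aeval g (p * X m))
          = pderiv j (aeval g p * g m) := by simp
        _ = pderiv j (aeval g p) * g m + aeval g p * pderiv j (g m) := pderiv_mul
        _ = (∑ k, aeval g (pderiv k p) * pderiv j (g k)) * g m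
              + aeval g p * pderiv j (g m) := by rw [hp]
        _ = ∑ k, aeval g (pderiv k (p * X m)) * pderiv j (g k) := by
            have h1 : ∀ k : Fin n, aeval g (pderiv k (p * X m)) * pderiv j (g k)
                = aeval g (pderiv k p) * pderiv j (g k) * g m
                  + (if k = m then aeval g p * pderiv j (g k) else 0) := by
              intro k
              rw [pderiv_mul, hx k]
              rcases eq_or_ne k m with rfl | h
              · simp; ring
              · simp [h]; ring
            rw [Finset.sum_congr rfl fun k _ => h1 k, Finset.sum_add_distrib,
              Finset.sum_ite_eq' Finset.univ m (fun k => aeval g p * pderiv j (g k)),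
              if_pos (Finset.mem_univ m), Finset.sum_mul]

lemma pderiv_pow_monomial_eq_zero {K : Type*} [CommRing K] {n : ℕ} (i : Fin n) :
    ∀ (k : ℕ) (s : Fin n →₀ ℕ) (a : K), s i < k →
      (((pderiv i).toLinearMap ^ k) (monomial s a)) = 0 := by
  intro k
  induction k with
  | zero => intro s a hs; omega
  | succ k ih =>
      intro s a hs
      rw [pow_succ, Module.End.mul_apply]
      have h0 : (pderiv i).toLinearMap (monomial s a)
          = monomial (s - Finsupp.single i 1) (a * (s i : K)) := pderiv_monomial
      rw [h0]
      rcases Nat.eq_zero_or_pos (s i) with h | h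
      · simp [h]
      · exact ih _ _ (by rw [Finsupp.tsub_apply, Finsupp.single_eq_same]; omega)

lemma pderiv_iterate_eq_zero {K : Type*} [CommRing K] {n : ℕ} (i : Fin n)
    (P : MvPolynomial (Fin n) K) (k : ℕ) (hk : P.totalDegree < k) :
    (((pderiv i).toLinearMap ^ k) P) = 0 := by
  conv_lhs => rw [P.as_sum]
  rw [map_sum]
  refine Finset.sum_eq_zero fun s hs => ?_
  refine pderiv_pow_monomial_eq_zero i _ s _ ?_
  have h1 : s i ≤ P.totalDegree := by
    refine le_trans ?_ (le_totalDegree hs)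
    rcases Nat.eq_zero_or_pos (s i) with h | h
    · omega
    · exact Finset.single_le_sum (f := fun j => s j) (fun _ _ => Nat.zero_le _)
        (Finsupp.mem_support_iff.mpr (by omega))
  omega

/-- Lemma: with `δᵢ(P) = λ⁻¹ ∂P/∂xᵢ` and `Δᵢ(P) = j(g₁,…,g_{i-1},P,g_{i+1},…,gₙ)`, one
has `Δᵢ(P∘Φ⁻¹) = δᵢ(P)∘Φ⁻¹` and `Δᵢ(P)∘Φ = δᵢ(P∘Φ)`; moreover every `Δᵢ` is locally
nilpotent. -/
theorem stmt11 {K : Type*} [Field K] [IsAlgClosed K] [CharZero K]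
    {n : ℕ} (f g : Fin n → MvPolynomial (Fin n) K)
    (hfg : ∀ i, aeval f (g i) = X i) (hgf : ∀ i, aeval g (f i) = X i)
    (lam : K) (hlam : lam ≠ 0) (hjac : jacDet f = C lam) :
    (∀ (i : Fin n) (P : MvPolynomial (Fin n) K),
        jacDet (Function.update g i (aeval g P)) = aeval g (C lam⁻¹ * pderiv i P)) ∧
    (∀ (i : Fin n) (P : MvPolynomial (Fin n) K),
        aeval f (jacDet (Function.update g i P)) = C lam⁻¹ * pderiv i (aeval f P)) ∧
    (∀ (i : Fin n) (P : MvPolynomial (Fin n) K),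
        ∃ k : ℕ, (fun Q => jacDet (Function.update g i Q))^[k] P = 0) := by
  classical
  -- composition identities
  have hgfid : ∀ Q : MvPolynomial (Fin n) K, aeval g (aeval f Q) = Q := by
    intro Q
    have h : (aeval g).comp (aeval f)
        = AlgHom.id K (MvPolynomial (Fin n) K) := by
      apply MvPolynomial.algHom_ext
      intro i
      rw [AlgHom.comp_apply, aeval_X, AlgHom.id_apply]
      exact hgf i
    calc aeval g (aeval f Q) = ((aeval g).comp (aeval f)) Q := rfl
      _ = Q := by rw [h]; rfl
  have hfgid : ∀ Q : MvPolynomial (Fin n) K, aeval f (aeval g Q) = Q := by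
    intro Q
    have h : (aeval f).comp (aeval g)
        = AlgHom.id K (MvPolynomial (Fin n) K) := by
      apply MvPolynomial.algHom_ext
      intro i
      rw [AlgHom.comp_apply, aeval_X, AlgHom.id_apply]
      exact hfg i
    calc aeval f (aeval g Q) = ((aeval f).comp (aeval g)) Q := rfl
      _ = Q := by rw [h]; rfl
  set Mg : Matrix (Fin n) (Fin n) (MvPolynomial (Fin n) K) :=
    Matrix.of fun k j => pderiv j (g k) with hMgdef
  -- jacDet g = C lam⁻¹
  have hprod : (Mg.map (aeval f)) * (Matrix.of fun i j => pderiv j (f i)) = 1 := by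
    ext k j
    rw [Matrix.mul_apply]
    have hcr := chain_rule_aux f j (g k)
    rw [hfg k] at hcr
    have : ∑ m, Mg.map (aeval f) k m * (Matrix.of fun i j => pderiv j (f i)) m j
        = pderiv j (X k : MvPolynomial (Fin n) K) := by
      rw [hcr]
      rfl
    rw [this]
    rcases eq_or_ne k j with rfl | h
    · simp [Matrix.one_apply]
    · simp [Matrix.one_apply, h, pderiv_X_of_ne h]
  have hdetg : jacDet g = C (lam⁻¹) := by
    have hd : aeval f (jacDet g) * C lam = 1 := by
      have := congrArg Matrix.det hprod
      rw [Matrix.det_mul, Matrix.det_one] at this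
      have hmap : (Mg.map (aeval f)).det = aeval f (Mg.det) :=
        ((aeval f).map_det Mg).symm
      rw [hmap] at this
      have : aeval f (jacDet g) * jacDet f = 1 := this
      rwa [hjac] at this
    have hd2 : jacDet g * C lam = 1 := by
      have := congrArg (aeval g) hd
      rw [map_mul, hgfid, map_one] at this
      rwa [show (aeval g) (C lam : MvPolynomial (Fin n) K) = C lam by simp] at this
    have hC : (C lam : MvPolynomial (Fin n) K) * C lam⁻¹ = 1 := by
      rw [← C_mul, mul_inv_cancel₀ hlam, C_1]
    calc jacDet g = jacDet g * (C lam * C lam⁻¹) := by rw [hC, mul_one]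
      _ = (jacDet g * C lam) * C lam⁻¹ := by ring
      _ = C lam⁻¹ := by rw [hd2, one_mul]
  -- the key identity
  have key : ∀ (i : Fin n) (P : MvPolynomial (Fin n) K),
      jacDet (Function.update g i (aeval g P)) = aeval g (C lam⁻¹ * pderiv i P) := by
    intro i P
    have hm : (Matrix.of fun k j => pderiv j (Function.update g i (aeval g P) k))
        = Mg.updateRow i (∑ m, aeval g (pderiv m P) • Mg m) := by
      ext k j
      rcases eq_or_ne k i with rfl | h
      · rw [Matrix.updateRow_self]
        simp only [Matrix.of_apply, Function.update_self]
        rw [chain_rule_aux g j P]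
        simp [hMgdef]
      · rw [Matrix.updateRow_ne h]
        simp [Function.update_of_ne h, hMgdef]
    rw [jacDet, hm, Matrix.det_updateRow_sum]
    have hdg : Mg.det = jacDet g := rfl
    rw [smul_eq_mul, hdg, hdetg, map_mul]
    have : (aeval g) (C lam⁻¹ : MvPolynomial (Fin n) K) = C lam⁻¹ := by simp
    rw [this, mul_comm]
  refine ⟨key, ?_, ?_⟩
  · intro i P
    have h1 := key i (aeval f P)
    rw [hgfid P] at h1
    have := congrArg (aeval f) h1
    rwa [hfgid] at this
  · intro i P
    -- local nilpotency
    set Δ : MvPolynomial (Fin n) K → MvPolynomial (Fin n) K :=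
      fun Q => jacDet (Function.update g i Q) with hΔ
    set E : MvPolynomial (Fin n) K →ₗ[K] MvPolynomial (Fin n) K :=
      (pderiv i).toLinearMap with hE
    have hiter : ∀ (k : ℕ) (Q : MvPolynomial (Fin n) K),
        Δ^[k] (aeval g Q) = aeval g (C (lam⁻¹ ^ k) * (E ^ k) Q) := by
      intro k
      induction k with
      | zero => intro Q; simp
      | succ k ih =>
          intro Q
          rw [Function.iterate_succ_apply', ih Q]
          have : Δ (aeval g (C (lam⁻¹ ^ k) * (E ^ k) Q))
              = aeval g (C lam⁻¹ * pderiv i (C (lam⁻¹ ^ k) * (E ^ k) Q)) := key i _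
          rw [this, pderiv_C_mul]
          have hsucc : (E ^ (k + 1)) Q = pderiv i ((E ^ k) Q) := by
            rw [pow_succ', Module.End.mul_apply]; rfl
          have hin : C lam⁻¹ * (C (lam⁻¹ ^ k) * pderiv i ((E ^ k) Q))
              = C (lam⁻¹ ^ (k + 1)) * (E ^ (k + 1)) Q := by
            rw [hsucc, ← mul_assoc, ← C_mul, ← pow_succ']
          rw [hin]
    refine ⟨(aeval f P).totalDegree + 1, ?_⟩
    have hP : P = aeval g (aeval f P) := (hgfid P).symm
    calc Δ^[(aeval f P).totalDegree + 1] P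
        = Δ^[(aeval f P).totalDegree + 1] (aeval g (aeval f P)) := by rw [← hP]
      _ = aeval g (C (lam⁻¹ ^ ((aeval f P).totalDegree + 1))
            * (E ^ ((aeval f P).totalDegree + 1)) (aeval f P)) := hiter _ _
      _ = 0 := by
          rw [pderiv_iterate_eq_zero i (aeval f P) _ (Nat.lt_succ_self _), mul_zero, map_zero]
end

section
/- Let Φ=(f_1,…,f_n) be a polynomial automorphism of K^n, deg_1 a p.w.h. degree with weights w_1,…,w_n, and deg_2 the p.w.h. degree with weights d_i = deg_1(f_i). With Δ_i(P) = j(g_1,…,g_{i-1},P,g_{i+1},…,g_n), where Φ^{-1}=(g_1,…,g_n), there exists an index i ∈ {1,…,n} such that deg_2(Δ_i) ≥ −w_i. -/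
open MvPolynomial

section Aux
variable {K : Type*} [CommRing K] {σ : Type*}

lemma wtd_mul_le (w : σ → ℕ) (p q : MvPolynomial σ K) :
    weightedTotalDegree w (p * q) ≤ weightedTotalDegree w p + weightedTotalDegree w q := by
  classical
  apply Finset.sup_le
  intro m hm
  obtain ⟨u, hu, v, hv, rfl⟩ := Finset.mem_add.mp (support_mul p q hm)
  rw [map_add]
  exact add_le_add (le_weightedTotalDegree w hu) (le_weightedTotalDegree w hv)

lemma wtd_sum_le (w : σ → ℕ) {ι : Type*} (s : Finset ι) (h : ι → MvPolynomial σ K)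
    {b : ℕ} (hb : ∀ i ∈ s, weightedTotalDegree w (h i) ≤ b) :
    weightedTotalDegree w (∑ i ∈ s, h i) ≤ b := by
  classical
  apply Finset.sup_le
  intro m hm
  have := MvPolynomial.support_sum hm
  obtain ⟨i, hi, hmi⟩ := Finset.mem_biUnion.mp this
  exact le_trans (le_weightedTotalDegree w hmi) (hb i hi)

open scoped Classical in
lemma wtd_C_le (w : σ → ℕ) (c : K) : weightedTotalDegree w (C c : MvPolynomial σ K) ≤ 0 := by
  apply Finset.sup_le
  intro m hm
  have h0 : m = 0 := by
    by_contra h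
    have h2 := mem_support_iff.mp hm
    rw [coeff_C, if_neg (fun h' => h h'.symm)] at h2
    exact h2 rfl
  simp [h0]

lemma wtd_pow_le (w : σ → ℕ) (p : MvPolynomial σ K) (k : ℕ) :
    weightedTotalDegree w (p ^ k) ≤ k * weightedTotalDegree w p := by
  induction k with
  | zero => simpa using wtd_C_le w (1 : K)
  | succ k ih =>
    calc weightedTotalDegree w (p ^ (k + 1)) ≤
        weightedTotalDegree w (p ^ k) + weightedTotalDegree w p := by
          rw [pow_succ]; exact wtd_mul_le w _ _
      _ ≤ k * weightedTotalDegree w p + weightedTotalDegree w p := Nat.add_le_add_right ih _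
      _ = (k + 1) * weightedTotalDegree w p := by ring

end Aux

section Aux2
variable {K : Type*} [CommRing K] {σ : Type*}

lemma wtd_prod_le (w : σ → ℕ) {ι : Type*} (s : Finset ι) (h : ι → MvPolynomial σ K)
    (b : ι → ℕ) (hb : ∀ i ∈ s, weightedTotalDegree w (h i) ≤ b i) :
    weightedTotalDegree w (∏ i ∈ s, h i) ≤ ∑ i ∈ s, b i := by
  classical
  induction s using Finset.induction with
  | empty => simpa using wtd_C_le w (1 : K)
  | insert _ _ hx ih =>
    rename_i x s'
    rw [Finset.prod_insert hx, Finset.sum_insert hx]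
    exact le_trans (wtd_mul_le w _ _)
      (add_le_add (hb x (Finset.mem_insert_self x s'))
        (ih fun i hi => hb i (Finset.mem_insert_of_mem hi)))

lemma wtd_aeval_le [Algebra K K] (w : σ → ℕ) (f : σ → MvPolynomial σ K)
    (Q : MvPolynomial σ K) :
    weightedTotalDegree w (aeval f Q) ≤
      weightedTotalDegree (fun k => weightedTotalDegree w (f k)) Q := by
  classical
  rw [aeval_def, eval₂_eq]
  apply wtd_sum_le
  intro m hm
  have step : weightedTotalDegree w
      ((algebraMap K (MvPolynomial σ K)) (coeff m Q) * ∏ i ∈ m.support, f i ^ m i) ≤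
      0 + ∑ i ∈ m.support, m i * weightedTotalDegree w (f i) := by
    refine le_trans (wtd_mul_le w _ _) (add_le_add ?_ ?_)
    · exact wtd_C_le w _
    · exact wtd_prod_le w _ _ _ fun i _ => wtd_pow_le w (f i) (m i)
  refine le_trans step ?_
  rw [zero_add]
  have hweq : (Finsupp.weight fun k => weightedTotalDegree w (f k)) m
      = ∑ i ∈ m.support, m i * weightedTotalDegree w (f i) := by
    rw [Finsupp.weight_apply, Finsupp.sum]
    simp [smul_eq_mul]
  rw [← hweq]
  exact le_weightedTotalDegree _ hm

end Aux2

section Aux3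
variable {K : Type*} [CommRing K] {σ : Type*}

lemma coeff_pderiv' [DecidableEq σ] (i : σ) (p : MvPolynomial σ K) (m : σ →₀ ℕ) :
    coeff m (pderiv i p) = (m i + 1 : ℕ) * coeff (m + Finsupp.single i 1) p := by
  induction p using MvPolynomial.induction_on' with
  | monomial s a =>
    rw [pderiv_monomial, coeff_monomial, coeff_monomial]
    by_cases h : s = m + Finsupp.single i 1
    · subst h
      rw [if_pos (by simp), if_pos rfl, Finsupp.add_apply, Finsupp.single_eq_same]
      push_cast
      ring
    · rw [if_neg h, mul_zero]
      by_cases h2 : s - Finsupp.single i 1 = m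
      · rw [if_pos h2]
        have hsi : s i = 0 := by
          by_contra hs
          apply h
          rw [← h2, tsub_add_cancel_of_le]
          rwa [Finsupp.single_le_iff, Nat.one_le_iff_ne_zero]
        simp [hsi]
      · rw [if_neg h2]
  | add p q hp hq =>
    simp [hp, hq, mul_add]

lemma wtd_mul_ge [IsDomain K] (w : σ → ℕ) {p q : MvPolynomial σ K}
    (hp : p ≠ 0) (hq : q ≠ 0) :
    weightedTotalDegree w p + weightedTotalDegree w q ≤ weightedTotalDegree w (p * q) := by
  classical
  set a := weightedTotalDegree w p with ha
  set b := weightedTotalDegree w q with hb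
  have key : weightedHomogeneousComponent w (a + b) (p * q) =
      weightedHomogeneousComponent w a p * weightedHomogeneousComponent w b q := by
    ext m
    by_cases hm : (Finsupp.weight w) m = a + b
    · rw [coeff_weightedHomogeneousComponent, if_pos hm, coeff_mul, coeff_mul]
      apply Finset.sum_congr rfl
      intro x hx
      have hxm : x.1 + x.2 = m := Finset.HasAntidiagonal.mem_antidiagonal.mp hx
      rw [coeff_weightedHomogeneousComponent, coeff_weightedHomogeneousComponent]
      by_cases h1 : (Finsupp.weight w) x.1 = a
      · have h2 : (Finsupp.weight w) x.2 = b := by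
          have := map_add (Finsupp.weight w) x.1 x.2
          rw [hxm, hm, h1] at this
          omega
        rw [if_pos h1, if_pos h2]
      · rw [if_neg h1]
        by_cases hc1 : coeff x.1 p = 0
        · rw [hc1, zero_mul, zero_mul]
        · have hle1 : (Finsupp.weight w) x.1 ≤ a :=
            le_weightedTotalDegree w (mem_support_iff.mpr hc1)
          have h2 : ¬ (Finsupp.weight w) x.2 ≤ b := by
            have := map_add (Finsupp.weight w) x.1 x.2
            rw [hxm, hm] at this
            omega
          have hc2 : coeff x.2 q = 0 := by
            by_contra hc2
            exact h2 (le_weightedTotalDegree w (mem_support_iff.mpr hc2))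
          rw [hc2, mul_zero, zero_mul]
    · rw [coeff_weightedHomogeneousComponent, if_neg hm]
      symm
      exact IsWeightedHomogeneous.coeff_eq_zero
        ((weightedHomogeneousComponent_isWeightedHomogeneous (w := w) (n := a) (φ := p)).mul
          (weightedHomogeneousComponent_isWeightedHomogeneous (w := w) (n := b) (φ := q))) m hm
  have htop : ∀ (r : MvPolynomial σ K), r ≠ 0 →
      weightedHomogeneousComponent w (weightedTotalDegree w r) r ≠ 0 := by
    intro r hr
    obtain ⟨m, hm, hw⟩ := Finset.exists_mem_eq_sup r.support
      (support_nonempty.mpr hr) (fun s => (Finsupp.weight w) s)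
    intro h0
    have := coeff_weightedHomogeneousComponent (w := w)
      (n := weightedTotalDegree w r) m (φ := r)
    rw [h0, coeff_zero,
      if_pos (show (Finsupp.weight w) m = weightedTotalDegree w r from hw.symm)] at this
    exact mem_support_iff.mp hm this.symm
  have hne : weightedHomogeneousComponent w (a + b) (p * q) ≠ 0 := by
    rw [key]
    exact mul_ne_zero (htop p hp) (htop q hq)
  obtain ⟨m, hm⟩ := ne_zero_iff.mp hne
  rw [coeff_weightedHomogeneousComponent] at hm
  by_cases hmw : (Finsupp.weight w) m = a + b
  · rw [if_pos hmw] at hm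
    calc a + b = (Finsupp.weight w) m := hmw.symm
      _ ≤ _ := le_weightedTotalDegree w (mem_support_iff.mpr hm)
  · rw [if_neg hmw] at hm
    exact absurd rfl hm

end Aux3

section Chain
variable {K : Type*} [CommRing K] {n : ℕ}

lemma pderiv_aeval_eq (g : Fin n → MvPolynomial (Fin n) K) (l : Fin n)
    (P : MvPolynomial (Fin n) K) :
    pderiv l (aeval g P) = ∑ k, aeval g (pderiv k P) * pderiv l (g k) := by
  induction P using MvPolynomial.induction_on with
  | C c => simp
  | add p q hp hq =>
    simp only [map_add, hp, hq, add_mul, ← Finset.sum_add_distrib]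
  | mul_X p i hp =>
    have key : ∀ k : Fin n, aeval g (pderiv k (p * X i)) * pderiv l (g k)
        = aeval g (pderiv k p) * pderiv l (g k) * g i
          + (if i = k then aeval g p * pderiv l (g i) else 0) := by
      intro k
      rw [pderiv_mul, map_add, map_mul, map_mul, aeval_X, pderiv_X, Pi.single_apply]
      split_ifs with h
      · subst h
        simp only [map_one, mul_one, add_mul]
        ring
      · simp only [map_zero, mul_zero, add_zero, add_zero]
        ring
    rw [map_mul, aeval_X, pderiv_mul, hp, Finset.sum_congr rfl (fun k _ => key k),
      Finset.sum_add_distrib, Finset.sum_ite_eq Finset.univ i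
        (fun _ => aeval g p * pderiv l (g i)), if_pos (Finset.mem_univ i), Finset.sum_mul]

end Chain

/-- Lemma: there is an index `i` such that `deg₂(Δᵢ) ≥ -wᵢ`, where
`Δᵢ(P) = j(g₁,…,g_{i-1},P,g_{i+1},…,gₙ)`.  Since the degree of a derivation is the
maximum over the variables `xⱼ` of `deg₂(Δᵢ(xⱼ)) - deg₂(xⱼ)`, this is expressed as:
there exist `i` and `j` with `Δᵢ(xⱼ) ≠ 0` and `deg₂(Δᵢ(xⱼ)) + wᵢ ≥ dⱼ`. -/
theorem stmt12 {K : Type*} [Field K] [IsAlgClosed K] [CharZero K]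
    {n : ℕ} (hn : 0 < n) (w : Fin n → ℕ) (hw : ∀ i, 0 < w i)
    (f g : Fin n → MvPolynomial (Fin n) K)
    (hf : Function.Bijective
      ⇑(aeval f : MvPolynomial (Fin n) K →ₐ[K] MvPolynomial (Fin n) K))
    (hfg : ∀ i, aeval f (g i) = X i) (hgf : ∀ i, aeval g (f i) = X i)
    (d : Fin n → ℕ) (hd : ∀ i, d i = weightedTotalDegree w (f i)) :
    ∃ i j : Fin n, jacDet (Function.update g i (X j)) ≠ 0 ∧
      d j ≤ weightedTotalDegree d (jacDet (Function.update g i (X j))) + w i := by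
  classical
  have hcomp_fg : ∀ P : MvPolynomial (Fin n) K, aeval f (aeval g P) = P := by
    intro P
    have hc : (aeval f : MvPolynomial (Fin n) K →ₐ[K] _).comp
        (aeval g : MvPolynomial (Fin n) K →ₐ[K] _) = AlgHom.id K _ := by
      apply MvPolynomial.algHom_ext
      intro i
      rw [AlgHom.comp_apply, aeval_X, hfg i, AlgHom.id_apply]
    calc aeval f (aeval g P)
        = ((aeval f : MvPolynomial (Fin n) K →ₐ[K] _).comp
            (aeval g : MvPolynomial (Fin n) K →ₐ[K] _)) P := rfl
      _ = P := by rw [hc]; rfl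
  set A : Matrix (Fin n) (Fin n) (MvPolynomial (Fin n) K) :=
    Matrix.of fun k l => pderiv l (g k) with hA
  set B : Matrix (Fin n) (Fin n) (MvPolynomial (Fin n) K) :=
    Matrix.of fun k l => aeval g (pderiv l (f k)) with hB
  have hBA : B * A = 1 := by
    ext i l
    rw [Matrix.mul_apply]
    have hthis := pderiv_aeval_eq g l (f i)
    rw [hgf i] at hthis
    have heq : ∑ k, B i k * A k l = pderiv l (X i : MvPolynomial (Fin n) K) := hthis.symm
    rw [heq, pderiv_X, Matrix.one_apply, Pi.single_apply]
  have hdetA : A.det ≠ 0 := by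
    have h1 : B.det * A.det = 1 := by rw [← Matrix.det_mul, hBA, Matrix.det_one]
    intro h
    rw [h, mul_zero] at h1
    exact zero_ne_one h1
  -- choose j
  set j : Fin n := ⟨0, hn⟩ with hj
  have hfj0 : f j ≠ 0 := by
    intro h
    have := hgf j
    rw [h, map_zero] at this
    exact MvPolynomial.X_ne_zero j this.symm
  have hdj : 0 < d j := by
    rcases Nat.eq_zero_or_pos (d j) with h | h
    swap
    · exact h
    · exfalso
      rw [hd j] at h
      have hnt : MvPolynomial.NonTorsionWeight w :=
        MvPolynomial.nonTorsionWeight_of (fun i => (hw i).ne')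
      have hall := (weightedTotalDegree_eq_zero_iff hnt (f j)).mp h
      have hC : f j = C (coeff 0 (f j)) := by
        apply MvPolynomial.ext
        intro m'
        rw [coeff_C]
        by_cases hm' : m' = 0
        · subst hm'; simp
        · rw [if_neg (fun h' => hm' h'.symm)]
          by_contra hcm
          have hm'supp : m' ∈ (f j).support := mem_support_iff.mpr hcm
          apply hm'
          ext x
          exact hall m' hm'supp x
      have := hgf j
      rw [hC, aeval_C] at this
      have h1 := congrArg totalDegree this
      rw [totalDegree_X] at h1
      have : (algebraMap K (MvPolynomial (Fin n) K)) (coeff 0 (f j)) = C (coeff 0 (f j)) := rfl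
      rw [this, totalDegree_C] at h1
      exact zero_ne_one h1
  -- top monomial of f j
  obtain ⟨m, hmsupp, hmw⟩ := Finset.exists_mem_eq_sup (f j).support
    (support_nonempty.mpr hfj0) (fun s => (Finsupp.weight w) s)
  have hwm : (Finsupp.weight w) m = d j := by rw [hd j]; exact hmw.symm
  have hm0 : m ≠ 0 := by
    intro h
    rw [h, map_zero] at hwm
    omega
  obtain ⟨i, hmi⟩ : ∃ i, m i ≠ 0 := by
    by_contra h
    push_neg at h
    exact hm0 (Finsupp.ext h)
  refine ⟨i, j, ?_⟩
  set P : MvPolynomial (Fin n) K := pderiv i (f j) with hP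
  set m' : Fin n →₀ ℕ := m - Finsupp.single i 1 with hm'
  have hm'add : m' + Finsupp.single i 1 = m := by
    rw [hm']
    exact tsub_add_cancel_of_le (by
      rw [Finsupp.single_le_iff]
      omega)
  have hcoeff : coeff m' P = ((m' i + 1 : ℕ) : K) * coeff m (f j) := by
    rw [hP, coeff_pderiv', hm'add]
  have hm'i : m' i + 1 = m i := by
    have := DFunLike.congr_fun hm'add i
    simpa [Finsupp.add_apply, Finsupp.single_eq_same] using this
  have hcoeffne : coeff m' P ≠ 0 := by
    rw [hcoeff, hm'i]
    apply mul_ne_zero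
    · exact_mod_cast (Nat.cast_ne_zero (R := K)).mpr hmi
    · exact mem_support_iff.mp hmsupp
  have hPne : P ≠ 0 := fun h => hcoeffne (by rw [h, coeff_zero])
  have hwsingle : (Finsupp.weight w) (Finsupp.single i 1) = w i := by
    rw [Finsupp.weight_apply, Finsupp.sum_single_index] <;> simp
  have hwm' : (Finsupp.weight w) m' + w i = d j := by
    rw [← hwsingle, ← map_add, hm'add, hwm]
  have h1 : d j ≤ weightedTotalDegree w P + w i := by
    rw [← hwm']
    exact Nat.add_le_add_right (le_weightedTotalDegree w (mem_support_iff.mpr hcoeffne)) _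
  set Q : MvPolynomial (Fin n) K := aeval g P with hQ
  have hQP : aeval f Q = P := hcomp_fg P
  have hQne : Q ≠ 0 := fun h => hPne (by rw [← hQP, h, map_zero])
  have h2 : weightedTotalDegree w P ≤ weightedTotalDegree d Q := by
    have hle := wtd_aeval_le w f Q
    rw [hQP] at hle
    have hdw : (fun k => weightedTotalDegree w (f k)) = d := funext fun k => (hd k).symm
    rwa [hdw] at hle
  have h3 : jacDet (Function.update g i (X j)) = A.det * Q := by
    have hu : jacDet (Function.update g i (X j)) =
        (A.updateRow i (Pi.single j 1)).det := by
      unfold jacDet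
      refine congrArg Matrix.det (Matrix.ext fun k l => ?_)
      by_cases hk : k = i
      · subst hk
        rw [Matrix.of_apply, Function.update_self, Matrix.updateRow_self, pderiv_X,
          Pi.single_apply, Pi.single_apply]
        exact if_congr eq_comm rfl rfl
      · rw [Matrix.of_apply, Function.update_of_ne hk, Matrix.updateRow_ne hk]
        rfl
    have hadj : A.adjugate = A.det • B := by
      calc A.adjugate = (B * A) * A.adjugate := by rw [hBA, Matrix.one_mul]
        _ = B * (A * A.adjugate) := by rw [Matrix.mul_assoc]
        _ = B * (A.det • 1) := by rw [Matrix.mul_adjugate]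
        _ = A.det • B := by rw [Matrix.mul_smul, Matrix.mul_one]
    rw [hu, ← Matrix.adjugate_apply, hadj, Matrix.smul_apply, smul_eq_mul]
    rfl
  constructor
  · rw [h3]
    exact mul_ne_zero hdetA hQne
  · rw [h3]
    calc d j ≤ weightedTotalDegree w P + w i := h1
      _ ≤ weightedTotalDegree d Q + w i := Nat.add_le_add_right h2 _
      _ ≤ weightedTotalDegree d (A.det * Q) + w i := by
          apply Nat.add_le_add_right
          exact le_trans (Nat.le_add_left _ _) (wtd_mul_ge d hdetA hQne)
end

section
/- Let Φ=(f_1,…,f_n) be a polynomial automorphism of K^n, deg_1 a p.w.h. degree with weights w_1,…,w_n, I the ideal of relations, and deg_2 the p.w.h. degree with weights d_i = deg_1(f_i). Let i be an index such that the derivation Δ_i(P) = j(g_1,…,g_{i-1},P,g_{i+1},…,g_n) (where Φ^{-1}=(g_1,…,g_n)) satisfies deg_2(Δ_i) ≥ −w_i. Then the leading part of Δ_i with respect to deg_2 is a locally nilpotent derivation of K[x_1,…,x_n] that maps I into I. -/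
open MvPolynomial

/-- The leading part, with respect to the weighted degree with weights `d`, of the
derivation `∑ aⱼ ∂/∂xⱼ` of degree `r`: it is `∑ bⱼ ∂/∂xⱼ` where `bⱼ` is the weighted
homogeneous component of `aⱼ` of degree `r + dⱼ` (zero if `r + dⱼ < 0`). -/
noncomputable def leadingDeriv {K : Type*} [CommRing K] {n : ℕ} (d : Fin n → ℕ) (r : ℤ)
    (a : Fin n → MvPolynomial (Fin n) K) (P : MvPolynomial (Fin n) K) :
    MvPolynomial (Fin n) K :=
  ∑ j, (if 0 ≤ r + (d j : ℤ) then
      weightedHomogeneousComponent d (r + (d j : ℤ)).toNat (a j) else 0) * pderiv j P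

namespace Stmt13
open Finsupp

variable {K : Type*} [CommRing K] {n : ℕ} {w : Fin n → ℕ}




/-- `p` has all monomial weights `≤ k` (`ℤ`-valued bound). -/
def Wle (w : Fin n → ℕ) (k : ℤ) (p : MvPolynomial (Fin n) K) : Prop :=
  ∀ e ∈ p.support, ((weight w e : ℕ) : ℤ) ≤ k


lemma Wle.mono {k l : ℤ} {p : MvPolynomial (Fin n) K} (h : Wle w k p) (hkl : k ≤ l) :
    Wle w l p := fun e he => (h e he).trans hkl

lemma wle_zero (k : ℤ) : Wle w k (0 : MvPolynomial (Fin n) K) := by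
  intro e he; simp at he

lemma Wle.eq_zero_of_neg {k : ℤ} {p : MvPolynomial (Fin n) K} (h : Wle w k p) (hk : k < 0) :
    p = 0 := by
  by_contra hp
  obtain ⟨e, he⟩ := (support_nonempty.2 hp)
  have := (h e he).trans_lt hk; omega

lemma Wle.add {k : ℤ} {p q : MvPolynomial (Fin n) K} (hp : Wle w k p) (hq : Wle w k q) :
    Wle w k (p + q) := by
  intro e he
  rcases Finset.mem_union.1 (MvPolynomial.support_add he) with h | h
  · exact hp e h
  · exact hq e h

lemma Wle.sum {ι : Type*} {s : Finset ι} {k : ℤ} {p : ι → MvPolynomial (Fin n) K}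
    (h : ∀ t ∈ s, Wle w k (p t)) : Wle w k (∑ t ∈ s, p t) := by
  classical
  induction s using Finset.induction_on with
  | empty => simpa using wle_zero k
  | insert _ _ hx ih =>
    rename_i a s
    rw [Finset.sum_insert hx]
    exact (h a (Finset.mem_insert_self _ _)).add
      (ih fun t ht => h t (Finset.mem_insert_of_mem ht))

lemma Wle.mul {k l : ℤ} {p q : MvPolynomial (Fin n) K} (hp : Wle w k p) (hq : Wle w l q) :
    Wle w (k + l) (p * q) := by
  intro e he
  rw [MvPolynomial.mem_support_iff, coeff_mul] at he
  obtain ⟨uv, huv, hne⟩ := Finset.exists_ne_zero_of_sum_ne_zero he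
  have hu : uv.1 ∈ p.support := by
    rw [MvPolynomial.mem_support_iff]; intro h0; apply hne; rw [h0, zero_mul]
  have hv : uv.2 ∈ q.support := by
    rw [MvPolynomial.mem_support_iff]; intro h0; apply hne; rw [h0, mul_zero]
  have := Finset.HasAntidiagonal.mem_antidiagonal.1 huv
  calc ((weight w e : ℕ) : ℤ) = ((weight w (uv.1 + uv.2) : ℕ) : ℤ) := by rw [this]
  _ = ((weight w uv.1 : ℕ) : ℤ) + ((weight w uv.2 : ℕ) : ℤ) := by
      rw [map_add]; push_cast; ring
  _ ≤ k + l := add_le_add (hp _ hu) (hq _ hv)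

lemma isWH_wle {m : ℕ} {p : MvPolynomial (Fin n) K}
    (h : IsWeightedHomogeneous w p m) : Wle w (m : ℤ) p := by
  intro e he
  rw [h (MvPolynomial.mem_support_iff.1 he)]

lemma Wle.comp_eq_zero {k : ℤ} {p : MvPolynomial (Fin n) K} (h : Wle w k p)
    {u : ℕ} (hu : k < (u : ℤ)) : weightedHomogeneousComponent w u p = 0 := by
  apply weightedHomogeneousComponent_eq_zero'
  intro e he hw
  exact absurd (hw ▸ h e he) (by exact not_le.2 hu)


/-- Multiplicativity of top weighted components. -/
lemma top_component_mul {a b : ℕ} {p q : MvPolynomial (Fin n) K}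
    (hp : ∀ e ∈ p.support, weight w e ≤ a) (hq : ∀ e ∈ q.support, weight w e ≤ b) :
    weightedHomogeneousComponent w (a + b) (p * q) =
      weightedHomogeneousComponent w a p * weightedHomogeneousComponent w b q := by
  classical
  ext e
  rw [coeff_weightedHomogeneousComponent, coeff_mul, coeff_mul]
  have key : ∀ uv ∈ Finset.HasAntidiagonal.antidiagonal e,
      coeff uv.1 (weightedHomogeneousComponent w a p) *
        coeff uv.2 (weightedHomogeneousComponent w b q) =
      if weight w e = a + b then coeff uv.1 p * coeff uv.2 q else 0 := by
    intro uv huv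
    have hsum : uv.1 + uv.2 = e := Finset.HasAntidiagonal.mem_antidiagonal.1 huv
    rw [coeff_weightedHomogeneousComponent, coeff_weightedHomogeneousComponent]
    by_cases h1 : coeff uv.1 p = 0
    · split_ifs <;> simp [h1]
    by_cases h2 : coeff uv.2 q = 0
    · split_ifs <;> simp [h2]
    have hwa : weight w uv.1 ≤ a := hp _ (MvPolynomial.mem_support_iff.2 h1)
    have hwb : weight w uv.2 ≤ b := hq _ (MvPolynomial.mem_support_iff.2 h2)
    have hwe : weight w e = weight w uv.1 + weight w uv.2 := by rw [← hsum, map_add]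
    by_cases htop : weight w e = a + b
    · have ha : weight w uv.1 = a := by omega
      have hb : weight w uv.2 = b := by omega
      rw [if_pos ha, if_pos hb, if_pos htop]
    · rw [if_neg htop]
      by_cases ha : weight w uv.1 = a
      · have hb : weight w uv.2 ≠ b := by omega
        rw [if_neg hb, mul_zero]
      · rw [if_neg ha, zero_mul]
  rw [Finset.sum_congr rfl key]
  split_ifs with h
  · rfl
  · exact Finset.sum_const_zero.symm

/-- Component of a product with a weighted homogeneous polynomial. -/
lemma component_mul_right_homog {e : ℕ} {q : MvPolynomial (Fin n) K}
    (hq : IsWeightedHomogeneous w q e) (p : MvPolynomial (Fin n) K) (k : ℕ) :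
    weightedHomogeneousComponent w k (p * q) =
      if e ≤ k then weightedHomogeneousComponent w (k - e) p * q else 0 := by
  classical
  ext ee
  rw [coeff_weightedHomogeneousComponent]
  have key : ∀ (z : MvPolynomial (Fin n) K), coeff ee z = coeff ee z := fun _ => rfl
  by_cases hle : e ≤ k
  · rw [if_pos hle, coeff_mul, coeff_mul]
    have : ∀ uv ∈ Finset.HasAntidiagonal.antidiagonal ee,
        coeff uv.1 (weightedHomogeneousComponent w (k - e) p) * coeff uv.2 q =
        if weight w ee = k then coeff uv.1 p * coeff uv.2 q else 0 := by
      intro uv huv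
      have hsum : uv.1 + uv.2 = ee := Finset.HasAntidiagonal.mem_antidiagonal.1 huv
      rw [coeff_weightedHomogeneousComponent]
      by_cases h2 : coeff uv.2 q = 0
      · split_ifs <;> simp [h2]
      by_cases h1 : coeff uv.1 p = 0
      · split_ifs <;> simp [h1]
      have hwb : weight w uv.2 = e := hq h2
      have hwe : weight w ee = weight w uv.1 + weight w uv.2 := by rw [← hsum, map_add]
      by_cases ha : weight w uv.1 = k - e
      · rw [if_pos ha]
        have : weight w ee = k := by omega
        rw [if_pos this]
      · rw [if_neg ha, if_neg (by omega), zero_mul]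
    rw [Finset.sum_congr rfl this]
    split_ifs with h
    · rfl
    · exact (Finset.sum_const_zero).symm
  · rw [if_neg hle, coeff_zero]
    split_ifs with h
    · rw [coeff_mul]
      apply Finset.sum_eq_zero
      intro uv huv
      by_cases h2 : coeff uv.2 q = 0
      · rw [h2, mul_zero]
      by_cases h1 : coeff uv.1 p = 0
      · rw [h1, zero_mul]
      exfalso
      have hwb : weight w uv.2 = e := hq h2
      have hsum : uv.1 + uv.2 = ee := Finset.HasAntidiagonal.mem_antidiagonal.1 huv
      have hwe : weight w ee = weight w uv.1 + weight w uv.2 := by rw [← hsum, map_add]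
      omega
    · rfl


lemma pderiv_as_sum (j : Fin n) (p : MvPolynomial (Fin n) K) :
    pderiv j p = ∑ e ∈ p.support, pderiv j (monomial e (coeff e p)) := by
  conv_lhs => rw [p.as_sum]
  rw [map_sum]

lemma weight_sub_single {e : Fin n →₀ ℕ} {j : Fin n} (h : e j ≠ 0) :
    weight w (e - single j 1) + w j = weight w e := by
  have he : (e - single j 1) + single j 1 = e := by
    ext x
    by_cases hx : x = j
    · subst hx; simp; omega
    · simp [single_apply, hx, Ne.symm hx]
  conv_rhs => rw [← he]
  rw [map_add]
  simp [weight_apply, sum_single_index]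

lemma isWH_pderiv_hom {m : ℕ} {p : MvPolynomial (Fin n) K}
    (hp : IsWeightedHomogeneous w p m) {j : Fin n} {k : ℕ} (hk : k + w j = m) :
    IsWeightedHomogeneous w (pderiv j p) k := by
  rw [pderiv_as_sum]
  apply IsWeightedHomogeneous.sum
  intro e he
  rw [pderiv_monomial]
  by_cases hej : e j = 0
  · rw [hej]; simp only [Nat.cast_zero, mul_zero]
    rw [map_zero]
    exact isWeightedHomogeneous_zero _ _ _
  · apply isWeightedHomogeneous_monomial
    have h1 : weight w (e - single j 1) + w j = weight w e := weight_sub_single hej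
    have h2 : weight w e = m := hp (MvPolynomial.mem_support_iff.1 he)
    omega

lemma isWH_pderiv_zero {m : ℕ} {p : MvPolynomial (Fin n) K}
    (hp : IsWeightedHomogeneous w p m) {j : Fin n} (hj : m < w j) :
    pderiv j p = 0 := by
  rw [pderiv_as_sum]
  apply Finset.sum_eq_zero
  intro e he
  rw [pderiv_monomial]
  by_cases hej : e j = 0
  · rw [hej]; simp
  · exfalso
    have h1 : weight w (e - single j 1) + w j = weight w e := weight_sub_single hej
    have h2 : weight w e = m := hp (MvPolynomial.mem_support_iff.1 he)
    omega

lemma Wle.pderiv {k : ℤ} {p : MvPolynomial (Fin n) K} (hp : Wle w k p) (j : Fin n) :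
    Wle w (k - w j) (pderiv j p) := by
  rw [pderiv_as_sum]
  apply Wle.sum
  intro e he
  rw [pderiv_monomial]
  intro ee hee
  have hsub := MvPolynomial.support_monomial_subset hee
  rw [Finset.mem_singleton] at hsub
  subst hsub
  have hej : e j ≠ 0 := by
    intro h0
    rw [h0] at hee
    simp at hee
  have h1 : weight w (e - single j 1) + w j = weight w e := weight_sub_single hej
  have h2 := hp e he
  omega


lemma eq_C_of_support_zero {p : MvPolynomial (Fin n) K} (h : ∀ e ∈ p.support, e = 0) :
    p = C (coeff 0 p) := by
  ext e
  by_cases he : e = 0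
  · subst he; simp
  · rw [coeff_C, if_neg (Ne.symm he)]
    by_contra hc
    exact he (h e (MvPolynomial.mem_support_iff.2 hc))

lemma totalDegree_pderiv_le {N : ℕ} {p : MvPolynomial (Fin n) K} (h : totalDegree p ≤ N + 1)
    (j : Fin n) : totalDegree (pderiv j p) ≤ N := by
  rw [pderiv_as_sum]
  apply totalDegree_finsetSum_le
  intro e he
  rw [pderiv_monomial]
  by_cases hej : e j = 0
  · rw [hej]; simp
  · refine (totalDegree_monomial_le _ _).trans ?_
    have hsub : (e - single j 1) + single j 1 = e := by
      ext x
      by_cases hx : x = j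
      · subst hx; simp; omega
      · simp [single_apply, hx, Ne.symm hx]
    have hsum : ((e - single j 1).sum fun _ => id) + 1 = e.sum fun _ => id := by
      conv_rhs => rw [← hsub]
      rw [Finsupp.sum_add_index (by intro a _; rfl) (by intro a _ b₁ b₂; rfl)]
      simp
    have hdeg : (e.sum fun _ => id) ≤ N + 1 := by
      calc (e.sum fun _ => id) ≤ totalDegree p := le_totalDegree he
      _ ≤ N + 1 := h
    omega

lemma pderiv_iterate_eq_zero (j : Fin n) :
    ∀ (N : ℕ) (p : MvPolynomial (Fin n) K), totalDegree p ≤ N → (pderiv j)^[N + 1] p = 0 := by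
  intro N
  induction N with
  | zero =>
    intro p hp
    have : ∀ e ∈ p.support, e = 0 := by
      intro e he
      ext x
      exact (totalDegree_eq_zero_iff (Fin n) p).1 (Nat.le_zero.1 hp) e he x
    rw [Function.iterate_one, eq_C_of_support_zero this, pderiv_C]
  | succ N ih =>
    intro p hp
    rw [Function.iterate_succ_apply]
    exact ih _ (totalDegree_pderiv_le hp j)

/-- top component of a nonzero polynomial is nonzero -/
lemma top_component_ne_zero {p : MvPolynomial (Fin n) K} (hp : p ≠ 0) :
    weightedHomogeneousComponent w (weightedTotalDegree w p) p ≠ 0 := by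
  classical
  obtain ⟨e, he, hmax⟩ := Finset.exists_mem_eq_sup p.support (support_nonempty.2 hp)
      (fun s => weight w s)
  intro h0
  have hcond : weight w e = weightedTotalDegree w p := hmax.symm
  have : coeff e (weightedHomogeneousComponent w (weightedTotalDegree w p) p) = coeff e p := by
    rw [coeff_weightedHomogeneousComponent, if_pos hcond]
  rw [h0, coeff_zero] at this
  exact (MvPolynomial.mem_support_iff.1 he) this.symm

lemma wle_weightedTotalDegree (p : MvPolynomial (Fin n) K) :
    Wle w ((weightedTotalDegree w p : ℕ) : ℤ) p := by
  intro e he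
  exact_mod_cast le_weightedTotalDegree w he


lemma Wle.nat {a : ℕ} {p : MvPolynomial (Fin n) K} (h : Wle w (a : ℤ) p) :
    ∀ e ∈ p.support, weight w e ≤ a := fun e he => by exact_mod_cast h e he

lemma wle_of_nat {a : ℕ} {p : MvPolynomial (Fin n) K} (h : ∀ e ∈ p.support, weight w e ≤ a) :
    Wle w (a : ℤ) p := fun e he => by exact_mod_cast h e he

lemma isWH_pow {q : MvPolynomial (Fin n) K} {c : ℕ}
    (hq : IsWeightedHomogeneous w q c) (k : ℕ) :
    IsWeightedHomogeneous w (q ^ k) (k * c) := by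
  induction k with
  | zero => simpa using isWeightedHomogeneous_one (R := K) w
  | succ k ih =>
    have h2 := ih.mul hq
    rw [← pow_succ] at h2
    convert h2 using 1
    ring

lemma top_pow {a : ℕ} {p : MvPolynomial (Fin n) K} (hp : Wle w (a : ℤ) p) (k : ℕ) :
    Wle w ((k * a : ℕ) : ℤ) (p ^ k) ∧
      weightedHomogeneousComponent w (k * a) (p ^ k) =
        (weightedHomogeneousComponent w a p) ^ k := by
  induction k with
  | zero =>
    constructor
    · simpa using isWH_wle (isWeightedHomogeneous_one (R := K) w)
    · simp
      exact (isWeightedHomogeneous_one (R := K) w).weightedHomogeneousComponent_same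
  | succ k ih =>
    constructor
    · rw [pow_succ, show (((k + 1) * a : ℕ) : ℤ) = ((k * a : ℕ) : ℤ) + (a : ℤ) by push_cast; ring]
      exact ih.1.mul hp
    · rw [pow_succ, show (k + 1) * a = k * a + a by ring,
        top_component_mul ih.1.nat hp.nat, ih.2, pow_succ]

lemma top_prod {ι : Type*} (s : Finset ι) (p : ι → MvPolynomial (Fin n) K) (k : ι → ℕ)
    (h : ∀ t ∈ s, Wle w ((k t : ℕ) : ℤ) (p t)) :
    Wle w ((∑ t ∈ s, k t : ℕ) : ℤ) (∏ t ∈ s, p t) ∧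
      weightedHomogeneousComponent w (∑ t ∈ s, k t) (∏ t ∈ s, p t) =
        ∏ t ∈ s, weightedHomogeneousComponent w (k t) (p t) := by
  classical
  induction s using Finset.cons_induction with
  | empty =>
    constructor
    · simpa using isWH_wle (isWeightedHomogeneous_one (R := K) w)
    · simp
      exact (isWeightedHomogeneous_one (R := K) w).weightedHomogeneousComponent_same
  | cons a s has ih =>
    have h' : ∀ t ∈ s, Wle w ((k t : ℕ) : ℤ) (p t) := fun t ht =>
      h t (Finset.mem_cons_of_mem ht)
    obtain ⟨ih1, ih2⟩ := ih h'
    have ha := h a (Finset.mem_cons_self _ _)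
    constructor
    · rw [Finset.prod_cons, Finset.sum_cons,
        show ((k a + ∑ t ∈ s, k t : ℕ) : ℤ) = (k a : ℤ) + ((∑ t ∈ s, k t : ℕ) : ℤ) by
          push_cast; ring]
      exact ha.mul ih1
    · rw [Finset.prod_cons, Finset.sum_cons, top_component_mul ha.nat ih1.nat, ih2,
        Finset.prod_cons]

lemma isWH_aeval {d : Fin n → ℕ} {F : Fin n → MvPolynomial (Fin n) K}
    (hF : ∀ j, IsWeightedHomogeneous w (F j) (d j)) {m : ℕ} {P : MvPolynomial (Fin n) K}
    (hP : IsWeightedHomogeneous d P m) :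
    IsWeightedHomogeneous w (aeval F P) m := by
  conv_lhs => rw [P.as_sum]
  rw [map_sum]
  apply IsWeightedHomogeneous.sum
  intro e he
  rw [aeval_monomial]
  have hw : weight d e = m := hP (MvPolynomial.mem_support_iff.1 he)
  have h0 : IsWeightedHomogeneous w (algebraMap K (MvPolynomial (Fin n) K) (coeff e P)) 0 := by
    rw [algebraMap_eq]
    exact isWeightedHomogeneous_C w _
  have hprod : IsWeightedHomogeneous w (e.prod fun j l => F j ^ l)
      (∑ j ∈ e.support, e j * d j) := by
    rw [Finsupp.prod]
    exact IsWeightedHomogeneous.prod _ _ _ (fun j _ => isWH_pow (hF j) (e j))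
  have hsum : (∑ j ∈ e.support, e j * d j) = m := by
    rw [← hw, weight_apply, Finsupp.sum]
    simp [smul_eq_mul]
  rw [hsum] at hprod
  simpa using h0.mul hprod

lemma aeval_component_top {d : Fin n → ℕ} {F : Fin n → MvPolynomial (Fin n) K}
    (hF : ∀ j, Wle w ((d j : ℕ) : ℤ) (F j)) (m : ℕ) (P : MvPolynomial (Fin n) K)
    (hP : Wle d (m : ℤ) P) :
    weightedHomogeneousComponent w m (aeval F P) =
      aeval (fun j => weightedHomogeneousComponent w (d j) (F j))
        (weightedHomogeneousComponent d m P) := by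
  classical
  conv_lhs => rw [P.as_sum]
  conv_rhs => rw [P.as_sum]
  rw [map_sum, map_sum, map_sum, map_sum]
  apply Finset.sum_congr rfl
  intro e he
  have hwe : weight d e ≤ m := by exact_mod_cast hP e he
  set kk := weight d e with hkk
  -- the product and its top component
  have hprodle : Wle w ((∑ j ∈ e.support, e j * d j : ℕ) : ℤ) (e.prod fun j l => F j ^ l) := by
    rw [Finsupp.prod]
    exact (top_prod e.support (fun j => F j ^ e j) (fun j => e j * d j)
      (fun j _ => (top_pow (hF j) (e j)).1)).1
  have hprodtop : weightedHomogeneousComponent w (∑ j ∈ e.support, e j * d j)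
        (e.prod fun j l => F j ^ l) =
      e.prod fun j l => (weightedHomogeneousComponent w (d j) (F j)) ^ l := by
    rw [Finsupp.prod, (top_prod e.support (fun j => F j ^ e j) (fun j => e j * d j)
      (fun j _ => (top_pow (hF j) (e j)).1)).2, Finsupp.prod]
    exact Finset.prod_congr rfl (fun j _ => (top_pow (hF j) (e j)).2)
  have hsum : (∑ j ∈ e.support, e j * d j) = kk := by
    rw [hkk, weight_apply, Finsupp.sum]
    simp [smul_eq_mul]
  rw [hsum] at hprodle hprodtop
  have hmono : IsWeightedHomogeneous d (monomial e (coeff e P)) kk :=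
    isWeightedHomogeneous_monomial d e _ rfl
  by_cases hm : kk = m
  · subst hm
    rw [hmono.weightedHomogeneousComponent_same, aeval_monomial, aeval_monomial,
      algebraMap_eq, weightedHomogeneousComponent_C_mul, hprodtop]
  · rw [hmono.weightedHomogeneousComponent_ne m (Ne.symm hm), map_zero, aeval_monomial,
      algebraMap_eq, weightedHomogeneousComponent_C_mul]
    rw [hprodle.comp_eq_zero (by omega : (kk : ℤ) < (m : ℤ)), mul_zero]


/-- Chain rule for partial derivatives of a polynomial substitution. -/
lemma pderiv_aeval_eq (F : Fin n → MvPolynomial (Fin n) K) (P : MvPolynomial (Fin n) K)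
    (j : Fin n) :
    pderiv j (aeval F P) = ∑ k, aeval F (pderiv k P) * pderiv j (F k) := by
  induction P using MvPolynomial.induction_on with
  | C a => simp
  | add p q hp hq =>
    rw [map_add, map_add, hp, hq, ← Finset.sum_add_distrib]
    congr 1
    funext k
    rw [map_add, map_add, add_mul]
  | mul_X p k hp =>
    rw [map_mul, aeval_X, pderiv_mul, hp, Finset.sum_mul]
    have key : ∀ l : Fin n, aeval F (pderiv l (p * X k)) * pderiv j (F l)
        = aeval F (pderiv l p) * pderiv j (F l) * F k
          + (if l = k then aeval F p * pderiv j (F k) else 0) := by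
      intro l
      rw [pderiv_mul]
      by_cases hl : l = k
      · subst hl
        rw [pderiv_X_self, mul_one, if_pos rfl, map_add, map_mul, aeval_X, add_mul]
        ring
      · rw [pderiv_X_of_ne (Ne.symm hl), mul_zero, add_zero, if_neg hl, add_zero, map_mul,
          aeval_X]
        ring
    rw [Finset.sum_congr rfl (fun l _ => key l), Finset.sum_add_distrib,
      Finset.sum_ite_eq' Finset.univ k fun _ => aeval F p * pderiv j (F k)]
    simp only [Finset.mem_univ, if_pos]





lemma jac_update_eq (g : Fin n → MvPolynomial (Fin n) K) (i : Fin n)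
    (P : MvPolynomial (Fin n) K) :
    (Matrix.of fun a b => pderiv b (Function.update g i P a)) =
      Matrix.updateRow (Matrix.of fun a b => pderiv b (g a)) i (fun b => pderiv b P) := by
  ext a b
  by_cases ha : a = i
  · subst ha; simp [Matrix.updateRow_apply]
  · simp [Matrix.updateRow_apply, Function.update_apply, ha]

lemma det_updateRow_finset_sum {R : Type*} [CommRing R] (M : Matrix (Fin n) (Fin n) R)
    (i : Fin n) {ι : Type*} (s : Finset ι) (v : ι → Fin n → R) :
    (M.updateRow i (∑ j ∈ s, v j)).det = ∑ j ∈ s, (M.updateRow i (v j)).det := by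
  classical
  induction s using Finset.cons_induction with
  | empty =>
    rw [Finset.sum_empty, Finset.sum_empty]
    apply Matrix.det_eq_zero_of_row_eq_zero i
    intro j
    simp [Matrix.updateRow_self]
  | cons a s has ih =>
    rw [Finset.sum_cons, Finset.sum_cons, Matrix.det_updateRow_add, ih]

/-- Expansion of `jacDet (update g i P)` along the row of `P`. -/
lemma jacDet_update_expand (g : Fin n → MvPolynomial (Fin n) K) (i : Fin n)
    (P : MvPolynomial (Fin n) K) :
    jacDet (Function.update g i P) =
      ∑ j, pderiv j P * jacDet (Function.update g i (X j)) := by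
  classical
  rw [jacDet, jac_update_eq]
  have hrow : (fun b => pderiv b P) =
      ∑ j : Fin n, (fun b => pderiv j P * pderiv b (X j : MvPolynomial (Fin n) K)) := by
    funext b
    rw [Finset.sum_apply]
    rw [Finset.sum_eq_single b]
    · rw [pderiv_X_self, mul_one]
    · intro j _ hj
      rw [pderiv_X_of_ne hj, mul_zero]
    · intro h; exact absurd (Finset.mem_univ b) h
  rw [hrow, det_updateRow_finset_sum]
  apply Finset.sum_congr rfl
  intro j _
  have : (fun b => pderiv j P * pderiv b (X j : MvPolynomial (Fin n) K)) =
      pderiv j P • (fun b => pderiv b (X j : MvPolynomial (Fin n) K)) := rfl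
  rw [this, Matrix.det_updateRow_smul, jacDet, jac_update_eq]

/-- `Δᵢ` composed with the substitution `aeval g`. -/
lemma jacDet_update_aeval (g : Fin n → MvPolynomial (Fin n) K) (i : Fin n)
    (Q : MvPolynomial (Fin n) K) :
    jacDet (Function.update g i (aeval g Q)) = jacDet g * aeval g (pderiv i Q) := by
  classical
  rw [jacDet, jac_update_eq]
  have hrow : (fun b => pderiv b (aeval g Q)) =
      ∑ k : Fin n, aeval g (pderiv k Q) • (Matrix.of fun a b => pderiv b (g a)) k := by
    funext b
    rw [Finset.sum_apply]
    simpa using pderiv_aeval_eq g Q b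
  rw [hrow, Matrix.det_updateRow_sum]
  rw [smul_eq_mul, mul_comm, jacDet]

/-- Chain rule for Jacobian determinants of mutually inverse substitutions. -/
lemma jacDet_mul_eq_one (f g : Fin n → MvPolynomial (Fin n) K)
    (hgf : ∀ a, aeval g (f a) = X a) :
    aeval g (jacDet f) * jacDet g = 1 := by
  classical
  have h2 : (Matrix.of fun a b => pderiv b (aeval g (f a))) =
      (Matrix.of fun a k => aeval g (pderiv k (f a))) * (Matrix.of fun k b => pderiv b (g k)) := by
    refine Matrix.ext fun a b => ?_
    rw [Matrix.mul_apply]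
    exact pderiv_aeval_eq g (f a) b
  have h1 : (Matrix.of fun a b => pderiv b (aeval g (f a))) = 1 := by
    refine Matrix.ext fun a b => ?_
    simp only [Matrix.of_apply, hgf a]
    by_cases hab : a = b
    · subst hab; rw [pderiv_X_self, Matrix.one_apply_eq]
    · rw [pderiv_X_of_ne hab, Matrix.one_apply_ne hab]
  have h3 := congrArg Matrix.det h2
  rw [h1, Matrix.det_one, Matrix.det_mul] at h3
  have h4 : (Matrix.of fun a k => aeval g (pderiv k (f a))).det = aeval g (jacDet f) := by
    rw [jacDet, AlgHom.map_det]
    congr 1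
  rw [h3, h4]
  rfl

lemma eq_C_of_mul_eq_one [IsDomain K] (hw : ∀ i : Fin n, 0 < w i)
    {p q : MvPolynomial (Fin n) K} (h : p * q = 1) : p = C (coeff 0 p) := by
  have h1 : (1 : MvPolynomial (Fin n) K) ≠ 0 := one_ne_zero
  have hp : p ≠ 0 := by rintro rfl; rw [zero_mul] at h; exact h1 h.symm
  have hq : q ≠ 0 := by rintro rfl; rw [mul_zero] at h; exact h1 h.symm
  set a := weightedTotalDegree w p with ha
  set b := weightedTotalDegree w q with hb
  have htop := top_component_mul (w := w) (p := p) (q := q)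
    (fun e he => le_weightedTotalDegree w he) (fun e he => le_weightedTotalDegree w he)
  rw [h] at htop
  have hne : weightedHomogeneousComponent w (a + b) (1 : MvPolynomial (Fin n) K) ≠ 0 := by
    rw [htop]
    exact mul_ne_zero (top_component_ne_zero hp) (top_component_ne_zero hq)
  have hab : a + b = 0 := by
    by_contra hab
    exact hne ((isWeightedHomogeneous_one (R := K) w).weightedHomogeneousComponent_ne _ hab)
  have ha0 : a = 0 := by omega
  have hz := (weightedTotalDegree_eq_zero_iff
    (nonTorsionWeight_of (fun i : Fin n => (hw i).ne')) p).1 ha0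
  apply eq_C_of_support_zero
  intro e he
  ext x
  simp [hz e he x]


/-- `ℤ`-indexed weighted homogeneous component (zero for negative index). -/
noncomputable def compZ (w : Fin n → ℕ) (t : ℤ) (p : MvPolynomial (Fin n) K) :
    MvPolynomial (Fin n) K :=
  if 0 ≤ t then weightedHomogeneousComponent w t.toNat p else 0

/-- The derivation `P ↦ ∑ⱼ aⱼ ∂ⱼP`. -/
noncomputable def DD (a : Fin n → MvPolynomial (Fin n) K) (P : MvPolynomial (Fin n) K) :
    MvPolynomial (Fin n) K :=
  ∑ j, a j * pderiv j P

lemma compZ_zero (t : ℤ) : compZ w t (0 : MvPolynomial (Fin n) K) = 0 := by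
  unfold compZ; split_ifs <;> simp

lemma compZ_add (t : ℤ) (p q : MvPolynomial (Fin n) K) :
    compZ w t (p + q) = compZ w t p + compZ w t q := by
  unfold compZ; split_ifs <;> simp

lemma compZ_sum {ι : Type*} (s : Finset ι) (t : ℤ) (p : ι → MvPolynomial (Fin n) K) :
    compZ w t (∑ x ∈ s, p x) = ∑ x ∈ s, compZ w t (p x) := by
  classical
  induction s using Finset.cons_induction with
  | empty => simpa using compZ_zero t
  | cons a s has ih => rw [Finset.sum_cons, Finset.sum_cons, compZ_add, ih]

lemma compZ_eq_zero_of_wle {t s : ℤ} {p : MvPolynomial (Fin n) K} (h : Wle w t p)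
    (hts : t < s) : compZ w s p = 0 := by
  unfold compZ
  split_ifs with hs
  · exact h.comp_eq_zero (by omega)
  · rfl

lemma compZ_of_isWH {m : ℕ} {p : MvPolynomial (Fin n) K} (h : IsWeightedHomogeneous w p m) :
    compZ w (m : ℤ) p = p := by
  unfold compZ
  rw [if_pos (by positivity), Int.toNat_natCast]
  exact IsWeightedHomogeneous.weightedHomogeneousComponent_same h

lemma DD_zero (a : Fin n → MvPolynomial (Fin n) K) : DD a 0 = 0 := by
  unfold DD; simp

lemma DD_add (a : Fin n → MvPolynomial (Fin n) K) (p q : MvPolynomial (Fin n) K) :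
    DD a (p + q) = DD a p + DD a q := by
  unfold DD
  rw [← Finset.sum_add_distrib]
  congr 1; funext j; rw [map_add, mul_add]

lemma DD_sum {ι : Type*} (a : Fin n → MvPolynomial (Fin n) K) (s : Finset ι)
    (p : ι → MvPolynomial (Fin n) K) : DD a (∑ x ∈ s, p x) = ∑ x ∈ s, DD a (p x) := by
  classical
  induction s using Finset.cons_induction with
  | empty => simpa using DD_zero a
  | cons x s hx ih => rw [Finset.sum_cons, Finset.sum_cons, DD_add, ih]

lemma DD_iterate_zero (a : Fin n → MvPolynomial (Fin n) K) (k : ℕ) : (DD a)^[k] 0 = 0 := by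
  induction k with
  | zero => rfl
  | succ k ih => rw [Function.iterate_succ_apply, DD_zero, ih]

lemma DD_iterate_sum {ι : Type*} (a : Fin n → MvPolynomial (Fin n) K) (k : ℕ) (s : Finset ι)
    (p : ι → MvPolynomial (Fin n) K) :
    (DD a)^[k] (∑ x ∈ s, p x) = ∑ x ∈ s, (DD a)^[k] (p x) := by
  induction k generalizing p with
  | zero => rfl
  | succ k ih =>
    rw [Function.iterate_succ_apply, DD_sum, ih]
    exact Finset.sum_congr rfl fun x _ => (Function.iterate_succ_apply (DD a) k (p x)).symm

lemma DD_C_mul (a : Fin n → MvPolynomial (Fin n) K) (e : K) (p : MvPolynomial (Fin n) K) :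
    DD a (C e * p) = C e * DD a p := by
  unfold DD
  rw [Finset.mul_sum]
  congr 1; funext j
  rw [pderiv_C_mul]
  ring

lemma DD_iterate_C_mul (a : Fin n → MvPolynomial (Fin n) K) (k : ℕ) (e : K)
    (p : MvPolynomial (Fin n) K) : (DD a)^[k] (C e * p) = C e * (DD a)^[k] p := by
  induction k generalizing p with
  | zero => rfl
  | succ k ih => rw [Function.iterate_succ_apply, Function.iterate_succ_apply, DD_C_mul, ih]

lemma comp_ne_zero_le {t : ℤ} {p : MvPolynomial (Fin n) K} (h : Wle w t p) {m : ℕ}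
    (hm : weightedHomogeneousComponent w m p ≠ 0) : (m : ℤ) ≤ t := by
  classical
  obtain ⟨e, he⟩ := support_nonempty.2 hm
  have hc := MvPolynomial.mem_support_iff.1 he
  rw [coeff_weightedHomogeneousComponent] at hc
  by_cases hw' : weight w e = m
  · rw [if_pos hw'] at hc
    have := h e (MvPolynomial.mem_support_iff.2 hc)
    omega
  · rw [if_neg hw'] at hc; exact absurd rfl hc

lemma decomp (w : Fin n → ℕ) (p : MvPolynomial (Fin n) K) :
    ∃ s : Finset ℕ,
      (p = ∑ m ∈ s, weightedHomogeneousComponent w m p) ∧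
      (∀ m : ℕ, m ∉ s → weightedHomogeneousComponent w m p = 0) := by
  classical
  refine ⟨(weightedHomogeneousComponent_finsupp (w := w) p).toFinset, ?_, ?_⟩
  · rw [← finsum_eq_sum _ (weightedHomogeneousComponent_finsupp p),
      sum_weightedHomogeneousComponent]
  · intro m hm
    by_contra h0
    exact hm ((weightedHomogeneousComponent_finsupp (w := w) p).mem_toFinset.2 h0)


variable {d : Fin n → ℕ} {r : ℤ} {a : Fin n → MvPolynomial (Fin n) K}


  {a : Fin n → MvPolynomial (Fin n) K}

lemma leadingDeriv_zero : leadingDeriv d r a (0 : MvPolynomial (Fin n) K) = 0 := by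
  unfold leadingDeriv; simp

lemma leadingDeriv_add (p q : MvPolynomial (Fin n) K) :
    leadingDeriv d r a (p + q) = leadingDeriv d r a p + leadingDeriv d r a q := by
  unfold leadingDeriv
  rw [← Finset.sum_add_distrib]
  congr 1; funext j; rw [map_add, mul_add]

lemma leadingDeriv_sum {ι : Type*} (s : Finset ι) (p : ι → MvPolynomial (Fin n) K) :
    leadingDeriv d r a (∑ x ∈ s, p x) = ∑ x ∈ s, leadingDeriv d r a (p x) := by
  classical
  induction s using Finset.cons_induction with
  | empty => simpa using leadingDeriv_zero
  | cons x s hx ih => rw [Finset.sum_cons, Finset.sum_cons, leadingDeriv_add, ih]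

lemma leadingDeriv_iterate_zero (k : ℕ) :
    (leadingDeriv d r a)^[k] (0 : MvPolynomial (Fin n) K) = 0 := by
  induction k with
  | zero => rfl
  | succ k ih => rw [Function.iterate_succ_apply, leadingDeriv_zero, ih]

lemma leadingDeriv_iterate_sum {ι : Type*} (k : ℕ) (s : Finset ι)
    (p : ι → MvPolynomial (Fin n) K) :
    (leadingDeriv d r a)^[k] (∑ x ∈ s, p x) = ∑ x ∈ s, (leadingDeriv d r a)^[k] (p x) := by
  induction k generalizing p with
  | zero => rfl
  | succ k ih =>
    rw [Function.iterate_succ_apply, leadingDeriv_sum, ih]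
    exact Finset.sum_congr rfl fun x _ =>
      (Function.iterate_succ_apply (leadingDeriv d r a) k (p x)).symm

lemma pderiv_homog_cases {m : ℕ} {P : MvPolynomial (Fin n) K}
    (hP : IsWeightedHomogeneous d P m) (j : Fin n) :
    pderiv j P = 0 ∨ (d j ≤ m ∧ IsWeightedHomogeneous d (pderiv j P) (m - d j)) := by
  by_cases h0 : pderiv j P = 0
  · exact Or.inl h0
  right
  have hdj : d j ≤ m := by
    by_contra hlt
    exact h0 (isWH_pderiv_zero hP (by omega))
  exact ⟨hdj, isWH_pderiv_hom hP (by omega)⟩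

lemma DD_homog_wle (ha : ∀ j, Wle d (r + (d j : ℤ)) (a j)) {m : ℕ} {P : MvPolynomial (Fin n) K}
    (hP : IsWeightedHomogeneous d P m) : Wle d ((m : ℤ) + r) (DD a P) := by
  unfold DD
  apply Wle.sum
  intro j _
  rcases pderiv_homog_cases hP j with h0 | ⟨hdj, hh⟩
  · rw [h0, mul_zero]; exact wle_zero _
  · refine ((ha j).mul (isWH_wle hh)).mono ?_
    omega

lemma leadingDeriv_homog (ha : ∀ j, Wle d (r + (d j : ℤ)) (a j)) {m : ℕ}
    {P : MvPolynomial (Fin n) K} (hP : IsWeightedHomogeneous d P m) :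
    leadingDeriv d r a P = compZ d ((m : ℤ) + r) (DD a P) := by
  classical
  by_cases hmr : 0 ≤ (m : ℤ) + r
  · have huz : ((((m : ℤ) + r).toNat : ℕ) : ℤ) = (m : ℤ) + r := Int.toNat_of_nonneg hmr
    set u : ℕ := ((m : ℤ) + r).toNat with hu
    unfold leadingDeriv compZ DD
    rw [if_pos hmr, map_sum]
    apply Finset.sum_congr rfl
    intro j _
    rcases pderiv_homog_cases hP j with h0 | ⟨hdj, hh⟩
    · rw [h0, mul_zero, mul_zero, map_zero]
    · rw [component_mul_right_homog hh (a j) u]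
      by_cases hrj : 0 ≤ r + (d j : ℤ)
      · have hidx2 : u - (m - d j) = (r + (d j : ℤ)).toNat := by omega
        rw [if_pos hrj, if_pos (show m - d j ≤ u by omega), hidx2]
      · rw [if_neg hrj, if_neg (show ¬(m - d j ≤ u) by omega), zero_mul]
  · unfold leadingDeriv compZ
    rw [if_neg hmr]
    apply Finset.sum_eq_zero
    intro j _
    by_cases hrj : 0 ≤ r + (d j : ℤ)
    · rcases pderiv_homog_cases hP j with h0 | ⟨hdj, hh⟩
      · rw [h0, mul_zero]
      · exfalso; omega
    · rw [if_neg hrj, zero_mul]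

lemma DD_wle (ha : ∀ j, Wle d (r + (d j : ℤ)) (a j)) {t : ℤ} {P : MvPolynomial (Fin n) K}
    (hP : Wle d t P) : Wle d (t + r) (DD a P) := by
  obtain ⟨s, hs, -⟩ := decomp d P
  have hDD : DD a P = ∑ m ∈ s, DD a (weightedHomogeneousComponent d m P) := by
    conv_lhs => rw [hs]
    rw [DD_sum]
  rw [hDD]
  apply Wle.sum
  intro m _
  by_cases hc : weightedHomogeneousComponent d m P = 0
  · rw [hc, DD_zero]; exact wle_zero _
  · have hmt : (m : ℤ) ≤ t := comp_ne_zero_le hP hc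
    exact (DD_homog_wle ha (weightedHomogeneousComponent_isWeightedHomogeneous m P)).mono
      (by omega)

lemma DD_iterate_wle (ha : ∀ j, Wle d (r + (d j : ℤ)) (a j)) {t : ℤ}
    {P : MvPolynomial (Fin n) K} (hP : Wle d t P) (k : ℕ) :
    Wle d (t + k * r) ((DD a)^[k] P) := by
  induction k generalizing t P with
  | zero => simpa using hP
  | succ k ih =>
    rw [Function.iterate_succ_apply]
    have := ih (DD_wle ha hP)
    refine this.mono (le_of_eq ?_)
    push_cast
    ring

lemma leadingDeriv_iterate_homog (ha : ∀ j, Wle d (r + (d j : ℤ)) (a j)) :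
    ∀ (k : ℕ) {m : ℕ} (P : MvPolynomial (Fin n) K), IsWeightedHomogeneous d P m →
      (leadingDeriv d r a)^[k] P = compZ d ((m : ℤ) + (k : ℤ) * r) ((DD a)^[k] P) := by
  intro k
  induction k with
  | zero =>
    intro m P hP
    simp only [Function.iterate_zero, id_eq, Nat.cast_zero, zero_mul, add_zero]
    exact (compZ_of_isWH hP).symm
  | succ k ih =>
    intro m P hP
    rw [Function.iterate_succ_apply, Function.iterate_succ_apply,
      leadingDeriv_homog ha hP]
    by_cases hmr : 0 ≤ (m : ℤ) + r
    · have huz : ((((m : ℤ) + r).toNat : ℕ) : ℤ) = (m : ℤ) + r := Int.toNat_of_nonneg hmr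
      set u : ℕ := ((m : ℤ) + r).toNat with hu
      have hQ : compZ d ((m : ℤ) + r) (DD a P) =
          weightedHomogeneousComponent d u (DD a P) := by
        unfold compZ; rw [if_pos hmr]
      rw [hQ, ih (weightedHomogeneousComponent d u (DD a P))
        (weightedHomogeneousComponent_isWeightedHomogeneous u _)]
      have hidx : (u : ℤ) + (k : ℤ) * r = (m : ℤ) + ((k : ℕ) + 1 : ℤ) * r := by
        rw [huz]; ring
      have hcast : (((k + 1 : ℕ)) : ℤ) = ((k : ℕ) + 1 : ℤ) := by push_cast; ring
      rw [hidx]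
      obtain ⟨s, hs, hnot⟩ := decomp d (DD a P)
      have hDD : (DD a)^[k] (DD a P) =
          ∑ v ∈ s, (DD a)^[k] (weightedHomogeneousComponent d v (DD a P)) := by
        conv_lhs => rw [hs]
        rw [DD_iterate_sum]
      rw [hcast, hDD, compZ_sum]
      have key : ∀ v ∈ s,
          compZ d ((m : ℤ) + ((k : ℕ) + 1 : ℤ) * r)
            ((DD a)^[k] (weightedHomogeneousComponent d v (DD a P))) =
          if v = u then
            compZ d ((m : ℤ) + ((k : ℕ) + 1 : ℤ) * r)
              ((DD a)^[k] (weightedHomogeneousComponent d u (DD a P)))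
          else 0 := by
        intro v hv
        by_cases hvu : v = u
        · rw [if_pos hvu, hvu]
        · rw [if_neg hvu]
          by_cases hc : weightedHomogeneousComponent d v (DD a P) = 0
          · rw [hc, DD_iterate_zero, compZ_zero]
          · have hvle : (v : ℤ) ≤ (m : ℤ) + r := comp_ne_zero_le (DD_homog_wle ha hP) hc
            have hvlt : (v : ℤ) < (m : ℤ) + r := by
              rcases lt_or_eq_of_le hvle with h | h
              · exact h
              · exfalso; apply hvu; omega
            refine compZ_eq_zero_of_wle
              (DD_iterate_wle ha (isWH_wle
                (weightedHomogeneousComponent_isWeightedHomogeneous v (DD a P))) k) ?_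
            have hexp : ((k : ℕ) + 1 : ℤ) * r = (k : ℤ) * r + r := by ring
            rw [hexp]
            linarith
      rw [Finset.sum_congr rfl key, Finset.sum_ite_eq' s u _]
      by_cases hus : u ∈ s
      · rw [if_pos hus]
      · rw [if_neg hus, hnot u hus, DD_iterate_zero, compZ_zero]
    · have hDP : DD a P = 0 := (DD_homog_wle ha hP).eq_zero_of_neg (by omega)
      have hz : compZ d ((m : ℤ) + r) (DD a P) = 0 := by rw [hDP, compZ_zero]
      rw [hz, leadingDeriv_iterate_zero, hDP, DD_iterate_zero, compZ_zero]



lemma compZ_of_nonneg {w : Fin n → ℕ} {t : ℤ} (h : 0 ≤ t) (p : MvPolynomial (Fin n) K) :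
    compZ w t p = weightedHomogeneousComponent w t.toNat p := if_pos h

lemma compZ_of_neg {w : Fin n → ℕ} {t : ℤ} (h : ¬ 0 ≤ t) (p : MvPolynomial (Fin n) K) :
    compZ w t p = 0 := if_neg h

end Stmt13

/-- Lemma: if `i` is an index with `deg₂(Δᵢ) = r ≥ -wᵢ`, then the leading part of `Δᵢ`
with respect to `deg₂` is locally nilpotent and maps the ideal of relations into
itself.  Here `Δᵢ(P) = j(g₁,…,g_{i-1},P,g_{i+1},…,gₙ)` and `r = deg₂(Δᵢ)` is expressed
via the values of `Δᵢ` on the variables. -/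
theorem stmt13 {K : Type*} [Field K] [IsAlgClosed K] [CharZero K]
    {n : ℕ} (hn : 0 < n) (w : Fin n → ℕ) (hw : ∀ i, 0 < w i)
    (f g : Fin n → MvPolynomial (Fin n) K)
    (hf : Function.Bijective
      ⇑(aeval f : MvPolynomial (Fin n) K →ₐ[K] MvPolynomial (Fin n) K))
    (hfg : ∀ i, aeval f (g i) = X i) (hgf : ∀ i, aeval g (f i) = X i)
    (d : Fin n → ℕ) (hd : ∀ i, d i = weightedTotalDegree w (f i))
    (i : Fin n) (r : ℤ)
    (hub : ∀ j, jacDet (Function.update g i (X j)) = 0 ∨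
      ((weightedTotalDegree d (jacDet (Function.update g i (X j))) : ℕ) : ℤ) ≤ r + d j)
    (hmax : ∃ j, jacDet (Function.update g i (X j)) ≠ 0 ∧
      ((weightedTotalDegree d (jacDet (Function.update g i (X j))) : ℕ) : ℤ) = r + d j)
    (hr : -(w i : ℤ) ≤ r) :
    (∀ P : MvPolynomial (Fin n) K,
      ∃ k : ℕ, (leadingDeriv d r (fun j => jacDet (Function.update g i (X j))))^[k] P = 0) ∧
    (∀ P ∈ relIdeal w f,
      leadingDeriv d r (fun j => jacDet (Function.update g i (X j))) P ∈ relIdeal w f) := by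
  classical
  set a : Fin n → MvPolynomial (Fin n) K := fun j => jacDet (Function.update g i (X j))
    with ha_def
  -- degree bound on the coefficients of the derivation
  have hub' : ∀ j, Stmt13.Wle d (r + (d j : ℤ)) (a j) := by
    intro j
    rcases hub j with h0 | hle
    · show Stmt13.Wle d _ (jacDet (Function.update g i (X j)))
      rw [h0]; exact Stmt13.wle_zero _
    · exact (Stmt13.wle_weightedTotalDegree (jacDet (Function.update g i (X j)))).mono hle
  -- the substitutions are mutually inverse
  have hστ : ∀ P : MvPolynomial (Fin n) K, aeval g (aeval f P) = P := by
    intro P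
    have hcomp : (aeval g).comp (aeval f) =
        AlgHom.id K (MvPolynomial (Fin n) K) := by
      apply MvPolynomial.algHom_ext
      intro j
      rw [AlgHom.comp_apply, aeval_X, AlgHom.id_apply]
      exact hgf j
    calc aeval g (aeval f P) = ((aeval g).comp (aeval f)) P := rfl
    _ = P := by rw [hcomp]; rfl
  have hτσ : ∀ P : MvPolynomial (Fin n) K, aeval f (aeval g P) = P := by
    intro P
    have hcomp : (aeval f).comp (aeval g) =
        AlgHom.id K (MvPolynomial (Fin n) K) := by
      apply MvPolynomial.algHom_ext
      intro j
      rw [AlgHom.comp_apply, aeval_X, AlgHom.id_apply]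
      exact hfg j
    calc aeval f (aeval g P) = ((aeval f).comp (aeval g)) P := rfl
    _ = P := by rw [hcomp]; rfl
  -- the Jacobian determinant of `g` is a nonzero constant
  have hunit : jacDet g * aeval g (jacDet f) = 1 := by
    rw [mul_comm]; exact Stmt13.jacDet_mul_eq_one f g hgf
  have hc : jacDet g = C (coeff 0 (jacDet g)) := Stmt13.eq_C_of_mul_eq_one hw hunit
  set c : K := coeff 0 (jacDet g) with hc_def
  -- `DD a` agrees with `Δᵢ`
  have hDeq : ∀ P, Stmt13.DD a P = jacDet (Function.update g i P) := by
    intro P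
    rw [Stmt13.jacDet_update_expand g i P, Stmt13.DD]
    exact Finset.sum_congr rfl fun j _ => (mul_comm _ _).symm
  -- the iterates of `Δᵢ` through the substitution
  have hiter : ∀ (k : ℕ) (Q : MvPolynomial (Fin n) K),
      (Stmt13.DD a)^[k] (aeval g Q) = C (c ^ k) * aeval g ((pderiv i)^[k] Q) := by
    intro k
    induction k with
    | zero => intro Q; simp
    | succ k ih =>
      intro Q
      rw [Function.iterate_succ_apply, hDeq, Stmt13.jacDet_update_aeval g i Q, hc,
        Stmt13.DD_iterate_C_mul, ih (pderiv i Q), ← mul_assoc, ← C_mul,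
        ← Function.iterate_succ_apply]
      congr 2
      rw [pow_succ]
      ring
  -- local nilpotency of `Δᵢ`
  have hlnd : ∀ P : MvPolynomial (Fin n) K, ∃ N, ∀ k, N ≤ k → (Stmt13.DD a)^[k] P = 0 := by
    intro P
    refine ⟨totalDegree (aeval f P) + 1, ?_⟩
    have h0 : ∀ Q : MvPolynomial (Fin n) K,
        (Stmt13.DD a)^[totalDegree Q + 1] (aeval g Q) = 0 := by
      intro Q
      rw [hiter, Stmt13.pderiv_iterate_eq_zero i (totalDegree Q) Q le_rfl, map_zero, mul_zero]
    have h0P : (Stmt13.DD a)^[totalDegree (aeval f P) + 1] P = 0 := by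
      have h1 := h0 (aeval f P)
      rwa [hστ P] at h1
    intro k hk
    obtain ⟨j, rfl⟩ : ∃ j, k = (totalDegree (aeval f P) + 1) + j :=
      ⟨k - (totalDegree (aeval f P) + 1), by omega⟩
    rw [add_comm, Function.iterate_add_apply, h0P, Stmt13.DD_iterate_zero]
  constructor
  · -- part 1 : local nilpotency of the leading part
    intro P
    obtain ⟨s, hs, -⟩ := Stmt13.decomp d P
    have hcomp1 : ∀ m ∈ s, ∃ N, ∀ k, N ≤ k →
        (leadingDeriv d r a)^[k] (weightedHomogeneousComponent d m P) = 0 := by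
      intro m _
      obtain ⟨N, hN⟩ := hlnd (weightedHomogeneousComponent d m P)
      refine ⟨N, fun k hk => ?_⟩
      rw [Stmt13.leadingDeriv_iterate_homog hub' k _
        (weightedHomogeneousComponent_isWeightedHomogeneous m P), hN k hk, Stmt13.compZ_zero]
    choose N hN using hcomp1
    set k0 := s.sup (fun m' => if h : m' ∈ s then N m' h else 0) with hk0
    refine ⟨k0, ?_⟩
    have hsum : (leadingDeriv d r a)^[k0] P =
        ∑ m ∈ s, (leadingDeriv d r a)^[k0] (weightedHomogeneousComponent d m P) := by
      conv_lhs => rw [hs]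
      rw [Stmt13.leadingDeriv_iterate_sum]
    rw [hsum]
    apply Finset.sum_eq_zero
    intro m hm
    refine hN m hm k0 ?_
    have hle := Finset.le_sup (f := fun m' => if h : m' ∈ s then N m' h else 0) hm
    have hle' : (if h : m ∈ s then N m h else 0) ≤ k0 := hle
    rwa [dif_pos hm] at hle'
  · -- part 2 : the leading part maps the ideal of relations into itself
    intro P hP
    rw [relIdeal, RingHom.mem_ker] at hP ⊢
    set fb : Fin n → MvPolynomial (Fin n) K := fun j => ldt w (f j) with hfb
    have hfbh : ∀ j, IsWeightedHomogeneous w (fb j) (d j) := by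
      intro j
      rw [hfb]
      show IsWeightedHomogeneous w (ldt w (f j)) (d j)
      rw [ldt, ← hd j]
      exact weightedHomogeneousComponent_isWeightedHomogeneous (d j) (f j)
    have hfble : ∀ j, Stmt13.Wle w ((d j : ℕ) : ℤ) (f j) := by
      intro j
      rw [hd j]
      exact Stmt13.wle_weightedTotalDegree (f j)
    have hfbtop : ∀ j, weightedHomogeneousComponent w (d j) (f j) = fb j := by
      intro j
      rw [hfb]
      show _ = ldt w (f j)
      rw [ldt, hd j]
    have TOP : ∀ (m : ℕ) (Q : MvPolynomial (Fin n) K), Stmt13.Wle d (m : ℤ) Q →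
        weightedHomogeneousComponent w m (aeval f Q) =
          aeval fb (weightedHomogeneousComponent d m Q) := by
      intro m Q hQ
      have hfun : (fun j => weightedHomogeneousComponent w (d j) (f j)) = fb :=
        funext hfbtop
      rw [Stmt13.aeval_component_top hfble m Q hQ, hfun]
    -- the homogeneous case
    have hom_case : ∀ (m : ℕ) (Q : MvPolynomial (Fin n) K), IsWeightedHomogeneous d Q m →
        aeval fb Q = 0 → aeval fb (leadingDeriv d r a Q) = 0 := by
      intro m Q hQh hQ0
      rw [Stmt13.leadingDeriv_homog hub' hQh]
      by_cases hmr : 0 ≤ (m : ℤ) + r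
      · have huz : ((((m : ℤ) + r).toNat : ℕ) : ℤ) = (m : ℤ) + r := Int.toNat_of_nonneg hmr
        set u : ℕ := ((m : ℤ) + r).toNat with hu
        rw [Stmt13.compZ_of_nonneg hmr]
        have hwleD : Stmt13.Wle d (u : ℤ) (Stmt13.DD a Q) :=
          (Stmt13.DD_homog_wle hub' hQh).mono (by omega)
        rw [← TOP u (Stmt13.DD a Q) hwleD]
        have hτD : aeval f (Stmt13.DD a Q) = C c * pderiv i (aeval f Q) := by
          rw [hDeq]
          have hupd : Function.update g i Q = Function.update g i (aeval g (aeval f Q)) := by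
            rw [hστ]
          rw [hupd, Stmt13.jacDet_update_aeval g i (aeval f Q), hc, map_mul, hτσ, aeval_C,
            algebraMap_eq]
        rw [hτD]
        have hτQ : Stmt13.Wle w ((m : ℤ) - 1) (aeval f Q) := by
          intro e he
          by_contra hgt
          push_neg at hgt
          have hwe : ((m : ℕ) : ℤ) ≤ ((Finsupp.weight w e : ℕ) : ℤ) := by omega
          have h1 : weightedHomogeneousComponent w (Finsupp.weight w e) (aeval f Q) = 0 := by
            rw [TOP (Finsupp.weight w e) Q ((Stmt13.isWH_wle hQh).mono hwe)]
            by_cases hem : Finsupp.weight w e = m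
            · rw [hem, IsWeightedHomogeneous.weightedHomogeneousComponent_same hQh, hQ0]
            · rw [hQh.weightedHomogeneousComponent_ne _ hem, map_zero]
          have h2 : coeff e (weightedHomogeneousComponent w (Finsupp.weight w e) (aeval f Q)) =
              coeff e (aeval f Q) := by
            rw [coeff_weightedHomogeneousComponent, if_pos rfl]
          rw [h1, coeff_zero] at h2
          exact (MvPolynomial.mem_support_iff.1 he) h2.symm
        have hbound : Stmt13.Wle w ((m : ℤ) - 1 - w i) (pderiv i (aeval f Q)) :=
          hτQ.pderiv i
        rw [weightedHomogeneousComponent_C_mul,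
          hbound.comp_eq_zero (by omega : (m : ℤ) - 1 - w i < (u : ℤ)), mul_zero]
      · rw [Stmt13.compZ_of_neg hmr, map_zero]
    -- decompose `P` into homogeneous components
    obtain ⟨s, hs, hnot⟩ := Stmt13.decomp d P
    have hcomps : ∀ m : ℕ, aeval fb (weightedHomogeneousComponent d m P) = 0 := by
      intro m
      by_cases hm : m ∈ s
      · have key : ∀ v ∈ s, weightedHomogeneousComponent w m
            (aeval fb (weightedHomogeneousComponent d v P)) =
            if v = m then aeval fb (weightedHomogeneousComponent d m P) else 0 := by
          intro v hv
          have hWH := Stmt13.isWH_aeval hfbh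
            (weightedHomogeneousComponent_isWeightedHomogeneous v P)
          by_cases hvm : v = m
          · subst hvm
            rw [if_pos rfl, IsWeightedHomogeneous.weightedHomogeneousComponent_same hWH]
          · rw [if_neg hvm,
              hWH.weightedHomogeneousComponent_ne _ (Ne.symm hvm)]
        have h0 : (0 : MvPolynomial (Fin n) K) =
            ∑ v ∈ s, if v = m then aeval fb (weightedHomogeneousComponent d m P) else 0 := by
          calc (0 : MvPolynomial (Fin n) K)
              = weightedHomogeneousComponent w m (aeval fb P) := by rw [hP, map_zero]
            _ = ∑ v ∈ s, weightedHomogeneousComponent w m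
                  (aeval fb (weightedHomogeneousComponent d v P)) := by
                conv_lhs => rw [hs]
                rw [map_sum, map_sum]
            _ = ∑ v ∈ s, if v = m then
                  aeval fb (weightedHomogeneousComponent d m P) else 0 :=
                Finset.sum_congr rfl key
        rw [Finset.sum_ite_eq' s m _, if_pos hm] at h0
        exact h0.symm
      · rw [hnot m hm, map_zero]
    have hsplit : leadingDeriv d r a P =
        ∑ m ∈ s, leadingDeriv d r a (weightedHomogeneousComponent d m P) := by
      conv_lhs => rw [hs]
      rw [Stmt13.leadingDeriv_sum]
    rw [hsplit, map_sum]
    apply Finset.sum_eq_zero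
    intro m _
    exact hom_case m (weightedHomogeneousComponent d m P)
      (weightedHomogeneousComponent_isWeightedHomogeneous m P) (hcomps m)
end
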